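/- arXiv:1304.0296 — 7 statements merged into one kernel-verified Lean document; each statement's English description precedes it below -/
import Mathlib

section
/- If A is an n-by-n Hermitian matrix, then d(A) = min{i_{≥0}(A), i_{≤0}(A)}. In particular, i_0(A) ≤ d(A) ≤ ⌊(n + i_0(A))/2⌋. -/
open Matrix Polynomial

noncomputable def zdi {m : Type*} [Fintype m] (A : Matrix m m ℂ) : ℕ :=
  sSup {k : ℕ | ∃ V : Matrix m (Fin k) ℂ, Vᴴ * V = 1 ∧ Vᴴ * A * V = 0}

noncomputable def matRe {m : Type*} (A : Matrix m m ℂ) : Matrix m m ℂ :=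
  (2⁻¹ : ℂ) • (A + Aᴴ)

noncomputable def iNonneg {m : Type*} [Fintype m] [DecidableEq m] (M : Matrix m m ℂ) : ℕ :=
  if hM : M.IsHermitian then (Finset.univ.filter fun i => 0 ≤ hM.eigenvalues i).card else 0

def numRange {m : Type*} [Fintype m] (A : Matrix m m ℂ) : Set ℂ :=
  {z | ∃ x : m → ℂ, star x ⬝ᵥ x = 1 ∧ star x ⬝ᵥ A.mulVec x = z}

noncomputable def arg2pi (z : ℂ) : ℝ :=
  if 0 ≤ Complex.arg z then Complex.arg z else Complex.arg z + 2 * Real.pi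

def UnitSim {m : Type*} [Fintype m] [DecidableEq m] (A B : Matrix m m ℂ) : Prop :=
  ∃ U ∈ Matrix.unitaryGroup m ℂ, Uᴴ * A * U = B

def UnitSimG {m l : Type*} [Fintype m] [DecidableEq m] [Fintype l] [DecidableEq l]
    (A : Matrix m m ℂ) (B : Matrix l l ℂ) : Prop :=
  ∃ e : m ≃ l, UnitSim (Matrix.reindex e e A) B

def superMat (n : ℕ) (w : ℕ → ℂ) : Matrix (Fin n) (Fin n) ℂ :=
  Matrix.of fun i j => if (j : ℕ) = (i : ℕ) + 1 then w (i : ℕ) else 0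

def cycMat (n : ℕ) (w : ℕ → ℂ) : Matrix (Fin n) (Fin n) ℂ :=
  Matrix.of fun i j => if (j : ℕ) = ((i : ℕ) + 1) % n then w (i : ℕ) else 0

noncomputable def iNonpos {m : Type*} [Fintype m] [DecidableEq m] (M : Matrix m m ℂ) : ℕ :=
  if hM : M.IsHermitian then (Finset.univ.filter fun i => hM.eigenvalues i ≤ 0).card else 0

noncomputable def iZero {m : Type*} [Fintype m] [DecidableEq m] (M : Matrix m m ℂ) : ℕ :=
  if hM : M.IsHermitian then (Finset.univ.filter fun i => hM.eigenvalues i = 0).card else 0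


theorem diag_ub {k n : ℕ} (d : Fin n → ℝ) (V : Matrix (Fin n) (Fin k) ℂ)
    (h1 : Vᴴ * V = 1) (h2 : Vᴴ * Matrix.diagonal (fun i => (d i : ℂ)) * V = 0) :
    k ≤ (Finset.univ.filter fun i => 0 ≤ d i).card := by
  by_contra hlt
  push_neg at hlt
  set S := {i : Fin n // 0 ≤ d i}
  let T : (Fin k → ℂ) →ₗ[ℂ] (S → ℂ) :=
    { toFun := fun c => fun i => V.mulVec c i.1
      map_add' := by intro a b; ext i; simp [Matrix.mulVec_add]
      map_smul' := by intro a b; ext i; simp [Matrix.mulVec_smul] }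
  have hnotinj : ¬ Function.Injective T := by
    intro hinj
    have := LinearMap.finrank_le_finrank_of_injective hinj
    simp only [Module.finrank_pi, Fintype.card_fin] at this
    rw [Fintype.card_subtype] at this
    omega
  rw [← LinearMap.ker_eq_bot] at hnotinj
  obtain ⟨c, hTc, hc0⟩ := Submodule.exists_mem_ne_zero_of_ne_bot hnotinj
  rw [LinearMap.mem_ker] at hTc
  set x := V.mulVec c with hx
  have hxz : ∀ i : Fin n, 0 ≤ d i → x i = 0 := fun i hi => congrFun hTc ⟨i, hi⟩
  have hq : star x ⬝ᵥ (Matrix.diagonal (fun i => (d i : ℂ))).mulVec x = 0 := by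
    rw [hx, Matrix.star_mulVec, Matrix.mulVec_mulVec, Matrix.dotProduct_mulVec,
      Matrix.vecMul_vecMul, ← Matrix.mul_assoc, h2, Matrix.vecMul_zero,
      zero_dotProduct]
  have hqs : (↑(∑ i : Fin n, d i * Complex.normSq (x i)) : ℂ) = 0 := by
    rw [← hq]
    simp only [dotProduct, Matrix.mulVec_diagonal, Pi.star_apply]
    push_cast
    congr 1
    ext i
    rw [Complex.normSq_eq_conj_mul_self]
    simp only [Complex.star_def]
    ring
  rw [Complex.ofReal_eq_zero] at hqs
  have hterm : ∀ i ∈ Finset.univ, d i * Complex.normSq (x i) ≤ 0 := by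
    intro i _
    rcases le_or_gt 0 (d i) with h | h
    · rw [hxz i h]; simp
    · exact mul_nonpos_of_nonpos_of_nonneg h.le (Complex.normSq_nonneg _)
  have hall := (Finset.sum_eq_zero_iff_of_nonpos hterm).mp hqs
  have hx0 : x = 0 := by
    ext i
    rcases le_or_gt 0 (d i) with h | h
    · rw [hxz i h]; rfl
    · have := hall i (Finset.mem_univ i)
      have hns : Complex.normSq (x i) = 0 := by
        rcases mul_eq_zero.mp this with h' | h'
        · exact absurd h' (ne_of_lt h)
        · exact h'
      simpa using Complex.normSq_eq_zero.mp hns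
  apply hc0
  have : (Vᴴ * V).mulVec c = Vᴴ.mulVec x := by rw [← Matrix.mulVec_mulVec, hx]
  rw [h1, Matrix.one_mulVec, hx0, Matrix.mulVec_zero] at this
  exact this


theorem sdp {n : ℕ} (a b : Fin n) :
    star (Pi.single a 1 : Fin n → ℂ) ⬝ᵥ (Pi.single b 1 : Fin n → ℂ) =
      if a = b then 1 else 0 := by
  have hs : star (Pi.single a 1 : Fin n → ℂ) = Pi.single a 1 := by
    ext i; simp [Pi.single_apply, apply_ite]
  rw [hs]
  by_cases h : a = b <;>
    simp [dotProduct, Pi.single_apply, h, Finset.sum_ite_eq, ite_and, eq_comm]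

theorem sdpd {n : ℕ} (dd : Fin n → ℂ) (a b : Fin n) :
    star (Pi.single a 1 : Fin n → ℂ) ⬝ᵥ
      ((Matrix.diagonal dd) *ᵥ (Pi.single b 1 : Fin n → ℂ)) =
      if a = b then dd b else 0 := by
  have hs : star (Pi.single a 1 : Fin n → ℂ) = Pi.single a 1 := by
    ext i; simp [Pi.single_apply, apply_ite]
  rw [hs]
  by_cases h : a = b <;>
    simp [dotProduct, Matrix.mulVec_single, Matrix.diagonal_apply, Pi.single_apply,
      ite_mul, mul_ite, h, Finset.sum_ite_eq, ite_and, eq_comm]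

theorem paircoef {dp dn : ℝ} (hp : 0 < dp) (hn : dn < 0) :
    ∃ a b : ℝ, a ^ 2 + b ^ 2 = 1 ∧ dp * a ^ 2 + dn * b ^ 2 = 0 := by
  have hδ : 0 < dp - dn := by linarith
  refine ⟨Real.sqrt (-dn / (dp - dn)), Real.sqrt (dp / (dp - dn)), ?_, ?_⟩
  · rw [Real.sq_sqrt (div_nonneg (by linarith) hδ.le),
      Real.sq_sqrt (div_nonneg hp.le hδ.le), ← add_div,
      div_eq_one_iff_eq hδ.ne']
    ring
  · rw [Real.sq_sqrt (div_nonneg (by linarith) hδ.le),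
      Real.sq_sqrt (div_nonneg hp.le hδ.le)]
    have : dp * (-dn / (dp - dn)) + dn * (dp / (dp - dn)) = (dp * -dn + dn * dp) / (dp - dn) := by
      ring
    rw [this, _root_.div_eq_zero_iff]
    left; ring

theorem diag_ex (n : ℕ) (d : Fin n → ℝ) :
    ∃ V : Matrix (Fin n) (Fin ((Finset.univ.filter fun i => d i = 0).card +
      min (Finset.univ.filter fun i => 0 < d i).card
          (Finset.univ.filter fun i => d i < 0).card)) ℂ,
      Vᴴ * V = 1 ∧ Vᴴ * Matrix.diagonal (fun i => (d i : ℂ)) * V = 0 := by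
  classical
  set Z := Finset.univ.filter fun i => d i = 0 with hZdef
  set P := Finset.univ.filter fun i => 0 < d i with hPdef
  set N := Finset.univ.filter fun i => d i < 0 with hNdef
  set m := min P.card N.card with hmdef
  have hmP : m ≤ P.card := min_le_left _ _
  have hmN : m ≤ N.card := min_le_right _ _
  set ζ : Fin Z.card → Fin n := fun a => ((Z.orderIsoOfFin rfl) a : Fin n) with hζdef
  set pf : Fin m → Fin n := fun b => ((P.orderIsoOfFin rfl) (Fin.castLE hmP b) : Fin n) with hpfdef
  set nf : Fin m → Fin n := fun b => ((N.orderIsoOfFin rfl) (Fin.castLE hmN b) : Fin n) with hnfdef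
  have hζd : ∀ a, d (ζ a) = 0 := fun a => (Finset.mem_filter.mp ((Z.orderIsoOfFin rfl) a).2).2
  have hpd : ∀ b, 0 < d (pf b) := fun b =>
    (Finset.mem_filter.mp ((P.orderIsoOfFin rfl) (Fin.castLE hmP b)).2).2
  have hnd : ∀ b, d (nf b) < 0 := fun b =>
    (Finset.mem_filter.mp ((N.orderIsoOfFin rfl) (Fin.castLE hmN b)).2).2
  have hζinj : Function.Injective ζ := fun a a' h =>
    (Z.orderIsoOfFin rfl).injective (Subtype.ext h)
  have hpinj : Function.Injective pf := fun b b' h =>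
    Fin.castLE_injective hmP ((P.orderIsoOfFin rfl).injective (Subtype.ext h))
  have hninj : Function.Injective nf := fun b b' h =>
    Fin.castLE_injective hmN ((N.orderIsoOfFin rfl).injective (Subtype.ext h))
  have hζp : ∀ a b, ζ a ≠ pf b := by
    intro a b h; have := hpd b; rw [← h, hζd a] at this; exact lt_irrefl 0 this
  have hζn : ∀ a b, ζ a ≠ nf b := by
    intro a b h; have := hnd b; rw [← h, hζd a] at this; exact lt_irrefl 0 this
  have hpn : ∀ b b', pf b ≠ nf b' := by
    intro b b' h; have h1 := hpd b; have h2 := hnd b'; rw [h] at h1; linarith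
  choose α β hab1 hab2 using fun b => paircoef (hpd b) (hnd b)
  set col : (Fin Z.card ⊕ Fin m) → (Fin n → ℂ) :=
    Sum.elim (fun a => (Pi.single (ζ a) 1 : Fin n → ℂ))
      (fun b => ((α b : ℂ) • (Pi.single (pf b) 1 : Fin n → ℂ)
        + (β b : ℂ) • (Pi.single (nf b) 1 : Fin n → ℂ))) with hcoldef
  set W : Matrix (Fin n) (Fin Z.card ⊕ Fin m) ℂ := Matrix.of fun i j => col j i with hWdef
  set D : Matrix (Fin n) (Fin n) ℂ := Matrix.diagonal (fun i => (d i : ℂ)) with hDdef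
  have happ : ∀ j j', (Wᴴ * W) j j' = star (col j) ⬝ᵥ col j' := by
    intro j j'
    simp [Matrix.mul_apply, Matrix.conjTranspose_apply, dotProduct, hWdef]
  have happD : ∀ j j', (Wᴴ * D * W) j j' = star (col j) ⬝ᵥ (D *ᵥ col j') := by
    intro j j'
    rw [Matrix.mul_assoc]
    simp [Matrix.mul_apply, Matrix.conjTranspose_apply, dotProduct, Matrix.mulVec, hWdef]
  have h1 : Wᴴ * W = 1 := by
    ext j j'
    rw [happ, Matrix.one_apply]
    rcases j with a | b <;> rcases j' with a' | b' <;>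
      simp only [hcoldef, Sum.elim_inl, Sum.elim_inr, star_add, star_smul, add_dotProduct,
        smul_dotProduct, dotProduct_add, dotProduct_smul, sdp, Sum.inl.injEq, Sum.inr.injEq]
    · simp [hζinj.eq_iff]
    · simp [hζp, hζn]
    · simp [(hζp a' b).symm, (hζn a' b).symm]
    · by_cases hbb : b = b'
      · subst hbb
        simp [hpn, (hpn b b).symm, smul_eq_mul, Complex.star_def, Complex.conj_ofReal]
        rw [← Complex.ofReal_one, ← hab1 b]
        push_cast
        ring
      · have hp1 : pf b ≠ pf b' := fun h => hbb (hpinj h)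
        have hn1 : nf b ≠ nf b' := fun h => hbb (hninj h)
        simp [hp1, hn1, hpn, (hpn b' b).symm, hbb]
  have h2 : Wᴴ * D * W = 0 := by
    ext j j'
    rw [happD]
    rcases j with a | b <;> rcases j' with a' | b' <;>
      simp only [hcoldef, hDdef, Sum.elim_inl, Sum.elim_inr, star_add, star_smul,
        add_dotProduct, smul_dotProduct, dotProduct_add, dotProduct_smul,
        Matrix.mulVec_add, Matrix.mulVec_smul, sdpd, Matrix.zero_apply]
    · simp [hζinj.eq_iff, hζd, apply_ite]
    · simp [hζp, hζn]
    · simp [(hζp a' b).symm, (hζn a' b).symm]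
    · by_cases hbb : b = b'
      · subst hbb
        simp [hpn, (hpn b b).symm, smul_eq_mul, Complex.star_def, Complex.conj_ofReal]
        rw [← Complex.ofReal_zero, ← hab2 b]
        push_cast
        ring
      · have hp1 : pf b ≠ pf b' := fun h => hbb (hpinj h)
        have hn1 : nf b ≠ nf b' := fun h => hbb (hninj h)
        simp [hp1, hn1, hpn, (hpn b' b).symm, hbb]
  set e : Fin (Z.card + m) ≃ (Fin Z.card ⊕ Fin m) := finSumFinEquiv.symm with hedef
  refine ⟨W.submatrix id ⇑e, ?_, ?_⟩
  · rw [Matrix.conjTranspose_submatrix]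
    have h3 := Matrix.submatrix_mul_equiv Wᴴ W ⇑e (Equiv.refl (Fin n)) ⇑e
    simp only [Equiv.coe_refl] at h3
    rw [h3, h1, Matrix.submatrix_one_equiv]
  · rw [Matrix.conjTranspose_submatrix]
    have s1 : Wᴴ.submatrix ⇑e id * D = (Wᴴ * D).submatrix ⇑e id := by
      ext i j; simp [Matrix.mul_apply]
    rw [s1]
    have s2 := Matrix.submatrix_mul_equiv (Wᴴ * D) W ⇑e (Equiv.refl (Fin n)) ⇑e
    simp only [Equiv.coe_refl] at s2
    rw [s2, h2, Matrix.submatrix_zero]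
    rfl


theorem conj_mem {n k : ℕ} (A U : Matrix (Fin n) (Fin n) ℂ)
    (hU : U ∈ Matrix.unitaryGroup (Fin n) ℂ) :
    (∃ V : Matrix (Fin n) (Fin k) ℂ, Vᴴ * V = 1 ∧ Vᴴ * A * V = 0) ↔
    (∃ V : Matrix (Fin n) (Fin k) ℂ, Vᴴ * V = 1 ∧ Vᴴ * (Uᴴ * A * U) * V = 0) := by
  have hUU : U * Uᴴ = 1 := by
    have := Matrix.mem_unitaryGroup_iff.mp hU
    rwa [Matrix.star_eq_conjTranspose] at this
  have hU'U : Uᴴ * U = 1 := by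
    have := Matrix.mem_unitaryGroup_iff'.mp hU
    rwa [Matrix.star_eq_conjTranspose] at this
  constructor
  · rintro ⟨V, h1, h2⟩
    refine ⟨Uᴴ * V, ?_, ?_⟩
    · have e : (Uᴴ * V)ᴴ * (Uᴴ * V) = Vᴴ * (U * Uᴴ) * V := by
        rw [Matrix.conjTranspose_mul, Matrix.conjTranspose_conjTranspose]
        simp only [Matrix.mul_assoc]
      rw [e, hUU, Matrix.mul_one, h1]
    · have e : (Uᴴ * V)ᴴ * (Uᴴ * A * U) * (Uᴴ * V)
          = Vᴴ * (U * Uᴴ) * A * (U * Uᴴ) * V := by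
        rw [Matrix.conjTranspose_mul, Matrix.conjTranspose_conjTranspose]
        simp only [Matrix.mul_assoc]
      rw [e, hUU, Matrix.mul_one, Matrix.mul_one, h2]
  · rintro ⟨V, h1, h2⟩
    refine ⟨U * V, ?_, ?_⟩
    · have e : (U * V)ᴴ * (U * V) = Vᴴ * (Uᴴ * U) * V := by
        rw [Matrix.conjTranspose_mul]
        simp only [Matrix.mul_assoc]
      rw [e, hU'U, Matrix.mul_one, h1]
    · have e : (U * V)ᴴ * A * (U * V) = Vᴴ * (Uᴴ * A * U) * V := by
        rw [Matrix.conjTranspose_mul]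
        simp only [Matrix.mul_assoc]
      rw [e, h2]

/-- Corollary 2.3. -/
theorem zdi_hermitian {n : ℕ} (A : Matrix (Fin n) (Fin n) ℂ) (hA : A.IsHermitian) :
    zdi A = min (iNonneg A) (iNonpos A) ∧
    iZero A ≤ zdi A ∧ zdi A ≤ (n + iZero A) / 2 := by
  classical
  set d : Fin n → ℝ := hA.eigenvalues with hd
  set U : Matrix (Fin n) (Fin n) ℂ := (Matrix.IsHermitian.eigenvectorUnitary hA : Matrix (Fin n) (Fin n) ℂ) with hUdef
  have hUmem : U ∈ Matrix.unitaryGroup (Fin n) ℂ := (Matrix.IsHermitian.eigenvectorUnitary hA).2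
  have hUU : U * Uᴴ = 1 := by
    have := Matrix.mem_unitaryGroup_iff.mp hUmem
    rwa [Matrix.star_eq_conjTranspose] at this
  have hU'U : Uᴴ * U = 1 := by
    have := Matrix.mem_unitaryGroup_iff'.mp hUmem
    rwa [Matrix.star_eq_conjTranspose] at this
  have hdiag : Uᴴ * A * U = Matrix.diagonal (fun i => (d i : ℂ)) := by
    have hsp := hA.spectral_theorem
    rw [Unitary.conjStarAlgAut_apply, Matrix.star_eq_conjTranspose] at hsp
    have e : Uᴴ * (U * Matrix.diagonal (RCLike.ofReal ∘ d) * Uᴴ) * U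
        = (Uᴴ * U) * Matrix.diagonal (RCLike.ofReal ∘ d) * (Uᴴ * U) := by
      simp only [Matrix.mul_assoc]
    rw [← hUdef] at hsp
    rw [hsp, e, hU'U, Matrix.one_mul, Matrix.mul_one]
    rfl
  -- counting
  have hnn : iNonneg A = (Finset.univ.filter fun i => 0 ≤ d i).card := by
    rw [iNonneg, dif_pos hA]
  have hnp : iNonpos A = (Finset.univ.filter fun i => d i ≤ 0).card := by
    rw [iNonpos, dif_pos hA]
  have hz : iZero A = (Finset.univ.filter fun i => d i = 0).card := by
    rw [iZero, dif_pos hA]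
  have c1 : (Finset.univ.filter fun i => 0 ≤ d i).card
      = (Finset.univ.filter fun i => 0 < d i).card
        + (Finset.univ.filter fun i => d i = 0).card := by
    rw [← Finset.card_union_of_disjoint]
    · congr 1
      ext i
      simp only [Finset.mem_union, Finset.mem_filter, Finset.mem_univ, true_and]
      constructor
      · intro h
        rcases h.lt_or_eq with h' | h'
        · exact Or.inl h'
        · exact Or.inr h'.symm
      · rintro (h | h)
        · exact h.le
        · exact le_of_eq h.symm
    · rw [Finset.disjoint_left]
      intro i hi1 hi2
      have := (Finset.mem_filter.mp hi1).2
      have := (Finset.mem_filter.mp hi2).2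
      linarith
  have c2 : (Finset.univ.filter fun i => d i ≤ 0).card
      = (Finset.univ.filter fun i => d i < 0).card
        + (Finset.univ.filter fun i => d i = 0).card := by
    rw [← Finset.card_union_of_disjoint]
    · congr 1
      ext i
      simp only [Finset.mem_union, Finset.mem_filter, Finset.mem_univ, true_and]
      constructor
      · intro h
        rcases h.lt_or_eq with h' | h'
        · exact Or.inl h'
        · exact Or.inr h'
      · rintro (h | h)
        · exact h.le
        · exact le_of_eq h
    · rw [Finset.disjoint_left]
      intro i hi1 hi2
      have := (Finset.mem_filter.mp hi1).2
      have := (Finset.mem_filter.mp hi2).2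
      linarith
  have c3 : (Finset.univ.filter fun i => 0 ≤ d i).card
      + (Finset.univ.filter fun i => d i ≤ 0).card
      = n + (Finset.univ.filter fun i => d i = 0).card := by
    have hcu := Finset.card_union_add_card_inter
      (Finset.univ.filter fun i => 0 ≤ d i) (Finset.univ.filter fun i => d i ≤ 0)
    have hu : (Finset.univ.filter fun i => 0 ≤ d i) ∪ (Finset.univ.filter fun i => d i ≤ 0)
        = Finset.univ := by
      ext i
      simp only [Finset.mem_union, Finset.mem_filter, Finset.mem_univ, true_and, iff_true]
      exact le_total 0 (d i)
    have hi : (Finset.univ.filter fun i => 0 ≤ d i) ∩ (Finset.univ.filter fun i => d i ≤ 0)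
        = Finset.univ.filter fun i => d i = 0 := by
      ext i
      simp only [Finset.mem_inter, Finset.mem_filter, Finset.mem_univ, true_and]
      constructor
      · rintro ⟨h1, h2⟩; exact le_antisymm h2 h1
      · intro h; rw [h]; exact ⟨le_refl 0, le_refl 0⟩
    rw [hu, hi, Finset.card_univ, Fintype.card_fin] at hcu
    omega
  -- the set
  set S : Set ℕ := {k : ℕ | ∃ V : Matrix (Fin n) (Fin k) ℂ, Vᴴ * V = 1 ∧ Vᴴ * A * V = 0}
    with hSdef
  set K : ℕ := min (iNonneg A) (iNonpos A) with hKdef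
  have hub : ∀ k ∈ S, k ≤ K := by
    intro k hk
    obtain ⟨V, h1, h2⟩ := (conj_mem A U hUmem).mp hk
    rw [hdiag] at h2
    have hle1 : k ≤ (Finset.univ.filter fun i => 0 ≤ d i).card := diag_ub d V h1 h2
    have hle2 : k ≤ (Finset.univ.filter fun i => d i ≤ 0).card := by
      have hneg : Matrix.diagonal (fun i => ((-d i : ℝ) : ℂ))
          = -Matrix.diagonal (fun i => (d i : ℂ)) := by
        ext i j
        rcases eq_or_ne i j with h | h <;> simp [Matrix.diagonal_apply, h]
      have h2' : Vᴴ * Matrix.diagonal (fun i => ((-d i : ℝ) : ℂ)) * V = 0 := by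
        rw [hneg, Matrix.mul_neg, Matrix.neg_mul, h2, neg_zero]
      have := diag_ub (fun i => -d i) V h1 h2'
      have hfeq : (Finset.univ.filter fun i => 0 ≤ -d i)
          = (Finset.univ.filter fun i => d i ≤ 0) := by
        ext i
        simp [neg_nonneg]
      rwa [hfeq] at this
    rw [hKdef, hnn, hnp]
    exact le_min hle1 hle2
  have hKeq : K = (Finset.univ.filter fun i => d i = 0).card
      + min (Finset.univ.filter fun i => 0 < d i).card
            (Finset.univ.filter fun i => d i < 0).card := by
    omega
  have hKmem : K ∈ S := by
    rw [hSdef, Set.mem_setOf_eq]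
    rw [conj_mem A U hUmem, hdiag, hKeq]
    exact diag_ex n d
  have hzdi : zdi A = K := by
    apply le_antisymm
    · exact csSup_le ⟨K, hKmem⟩ hub
    · exact le_csSup ⟨K, hub⟩ hKmem
  refine ⟨hzdi, ?_, ?_⟩
  · rw [hzdi]
    omega
  · rw [hzdi]
    omega
end

section
/- If A is an n-by-n complex matrix such that dim ker(Re(e^{−iθ₀}A)) ≤ 1 for some real θ₀, then d(A) ≤ ⌈n/2⌉. -/
open Matrix Polynomial

/-- Corollary 2.5. -/
theorem zdi_le_ceil_half_of_ker_re_le_one {n : ℕ} (A : Matrix (Fin n) (Fin n) ℂ) (θ₀ : ℝ)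
    (h : Module.finrank ℂ
        (LinearMap.ker (matRe (Complex.exp (-(θ₀ : ℂ) * Complex.I) • A)).mulVecLin) ≤ 1) :
    zdi A ≤ (n + 1) / 2 := by
  set B : Matrix (Fin n) (Fin n) ℂ := Complex.exp (-(θ₀ : ℂ) * Complex.I) • A with hBdef
  set H : Matrix (Fin n) (Fin n) ℂ := matRe B with hHdef
  apply csSup_le
  · exact ⟨0, (0 : Matrix (Fin n) (Fin 0) ℂ), by ext i j; exact i.elim0,
      by ext i j; exact i.elim0⟩
  rintro k ⟨V, hV1, hV2⟩
  have hB0 : Vᴴ * B * V = 0 := by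
    rw [hBdef, Matrix.mul_smul, Matrix.smul_mul, hV2, smul_zero]
  have hBH0 : Vᴴ * Bᴴ * V = 0 := by
    have := congrArg Matrix.conjTranspose hB0
    simpa [Matrix.conjTranspose_mul, Matrix.mul_assoc] using this
  have hH0 : Vᴴ * H * V = 0 := by
    rw [hHdef]
    simp only [matRe, Matrix.mul_smul, Matrix.smul_mul, Matrix.mul_add, Matrix.add_mul,
      hB0, hBH0, add_zero, smul_zero]
  have hVV : Vᴴ.mulVecLin ∘ₗ V.mulVecLin = LinearMap.id := by
    rw [← Matrix.mulVecLin_mul, hV1, Matrix.mulVecLin_one]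
  have hVinj : Function.Injective V.mulVecLin := by
    have h1 : Function.Injective (⇑Vᴴ.mulVecLin ∘ ⇑V.mulVecLin) := by
      rw [← LinearMap.coe_comp, hVV]; exact fun a b hab => hab
    exact h1.of_comp
  have hVsurj : Function.Surjective Vᴴ.mulVecLin := by
    have h1 : Function.Surjective (⇑Vᴴ.mulVecLin ∘ ⇑V.mulVecLin) := by
      rw [← LinearMap.coe_comp, hVV]; exact fun a => ⟨a, rfl⟩
    exact h1.of_comp
  set f : (Fin k → ℂ) →ₗ[ℂ] (Fin n → ℂ) := H.mulVecLin ∘ₗ V.mulVecLin with hf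
  have hkerf : Module.finrank ℂ (LinearMap.ker f) ≤ 1 := by
    calc Module.finrank ℂ (LinearMap.ker f)
        = Module.finrank ℂ (Submodule.map V.mulVecLin (LinearMap.ker f)) :=
          (Submodule.equivMapOfInjective _ hVinj _).finrank_eq
      _ ≤ Module.finrank ℂ (LinearMap.ker H.mulVecLin) := by
          apply Submodule.finrank_mono
          rw [hf, LinearMap.ker_comp]
          exact Submodule.map_comap_le _ _
      _ ≤ 1 := h
  have hcomp0 : Vᴴ.mulVecLin ∘ₗ f = 0 := by
    rw [hf, ← Matrix.mulVecLin_mul, ← Matrix.mulVecLin_mul, ← Matrix.mul_assoc, hH0,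
      Matrix.mulVecLin_zero]
  have hrangef : LinearMap.range f ≤ LinearMap.ker Vᴴ.mulVecLin :=
    LinearMap.range_le_ker_iff.mpr hcomp0
  have hle : Module.finrank ℂ (LinearMap.range f)
      ≤ Module.finrank ℂ (LinearMap.ker Vᴴ.mulVecLin) := Submodule.finrank_mono hrangef
  have hrn1 : Module.finrank ℂ (LinearMap.range Vᴴ.mulVecLin)
      + Module.finrank ℂ (LinearMap.ker Vᴴ.mulVecLin) = n := by
    rw [LinearMap.finrank_range_add_finrank_ker]; simp
  have hrk1 : Module.finrank ℂ (LinearMap.range Vᴴ.mulVecLin) = k := by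
    rw [LinearMap.range_eq_top.mpr hVsurj, finrank_top]; simp
  have hrn2 : Module.finrank ℂ (LinearMap.range f)
      + Module.finrank ℂ (LinearMap.ker f) = k := by
    rw [LinearMap.finrank_range_add_finrank_ker]; simp
  omega
end

section
/- Let n ≥ 1 and let A be the n-by-n complex matrix with entries A(j, j+1) = w_j for 1 ≤ j ≤ n−1, where w_1, …, w_{n−1} are all nonzero, and all other entries equal to 0. Then d(A) = ⌈n/2⌉, and moreover i_{≥0}(Re(e^{−iθ}A)) = ⌈n/2⌉ for every real θ. -/
open Matrix Polynomial

lemma sum_ite_coe {n : ℕ} (v : ℕ) (f : Fin n → ℂ) :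
    (∑ j : Fin n, if (j : ℕ) = v then f j else 0) = if h : v < n then f ⟨v, h⟩ else 0 := by
  by_cases h : v < n
  · rw [dif_pos h]
    have h2 : (∑ j : Fin n, if j = (⟨v, h⟩ : Fin n) then f j else 0) = f ⟨v, h⟩ := by
      simp [Finset.sum_ite_eq' Finset.univ (⟨v, h⟩ : Fin n) f]
    rw [← h2]
    apply Finset.sum_congr rfl
    intro j _
    congr 1
    simp [Fin.ext_iff]
  · rw [dif_neg h]
    apply Finset.sum_eq_zero
    intro j _
    rw [if_neg]
    omega

lemma sum_ite_coe' {n : ℕ} (v : ℕ) (f : Fin n → ℂ) :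
    (∑ j : Fin n, if v = (j : ℕ) + 1 then f j else 0)
      = if h : v - 1 < n ∧ v ≠ 0 then f ⟨v - 1, h.1⟩ else 0 := by
  by_cases h : v - 1 < n ∧ v ≠ 0
  · rw [dif_pos h]
    have h2 : (∑ j : Fin n, if j = (⟨v - 1, h.1⟩ : Fin n) then f j else 0) = f ⟨v - 1, h.1⟩ := by
      simp [Finset.sum_ite_eq' Finset.univ (⟨v - 1, h.1⟩ : Fin n) f]
    rw [← h2]
    apply Finset.sum_congr rfl
    intro j _
    congr 1
    simp only [Fin.ext_iff, eq_iff_iff]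
    omega
  · rw [dif_neg h]
    apply Finset.sum_eq_zero
    intro j _
    rw [if_neg]
    omega


lemma charpoly_diag {n : ℕ} (d : Fin n → ℂ) :
    (diagonal d).charpoly = ∏ i, (X - C (d i)) := by
  have h : charmatrix (diagonal d) = diagonal (fun i => (X : ℂ[X]) - C (d i)) := by
    ext i j
    by_cases hij : i = j
    · subst hij
      rw [charmatrix_apply_eq, diagonal_apply_eq, diagonal_apply_eq]
    · rw [charmatrix_apply_ne _ _ _ hij, diagonal_apply_ne _ hij, diagonal_apply_ne _ hij,
        map_zero, neg_zero]
  rw [Matrix.charpoly, h, det_diagonal]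

lemma charpoly_unitary_conj {n : ℕ} (U : Matrix (Fin n) (Fin n) ℂ)
    (hU : U ∈ Matrix.unitaryGroup (Fin n) ℂ) (D : Matrix (Fin n) (Fin n) ℂ) :
    (U * D * star U).charpoly = D.charpoly := by
  have h1 : U * star U = 1 := Matrix.mem_unitaryGroup_iff.mp hU
  let U' := (C : ℂ →+* ℂ[X]).mapMatrix U
  let W := (C : ℂ →+* ℂ[X]).mapMatrix (star U)
  have hm1 : U' * W = 1 := by
    rw [← _root_.map_mul, h1, _root_.map_one]
  have hC : charmatrix (U * D * star U) = U' * charmatrix D * W := by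
    rw [Matrix.charmatrix, Matrix.charmatrix, _root_.map_mul, _root_.map_mul, mul_sub, sub_mul]
    congr 1
    rw [(Matrix.scalar_commute (X : ℂ[X]) (fun r' => Commute.all _ _) U').symm.eq,
      mul_assoc, hm1, mul_one]
  have hd : U'.det * W.det = 1 := by rw [← det_mul, hm1, det_one]
  rw [Matrix.charpoly, Matrix.charpoly, hC, det_mul, det_mul,
    mul_comm U'.det _, mul_assoc, hd, mul_one]

lemma roots_prod_lemma {n : ℕ} (d : Fin n → ℂ) :
    (∏ i, (X - C (d i))).roots = Multiset.map d Finset.univ.val := by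
  rw [Finset.prod_eq_multiset_prod]
  rw [show Multiset.map (fun i => X - C (d i)) Finset.univ.val
      = Multiset.map (fun a => X - C a) (Multiset.map d Finset.univ.val) by
    rw [Multiset.map_map]; rfl]
  exact Polynomial.roots_multiset_prod_X_sub_C _

lemma eig_multiset_eq {n : ℕ} (U V : Matrix (Fin n) (Fin n) ℂ)
    (hU : U ∈ Matrix.unitaryGroup (Fin n) ℂ) (hV : V ∈ Matrix.unitaryGroup (Fin n) ℂ)
    (d e : Fin n → ℂ) (h : U * diagonal d * star U = V * diagonal e * star V) :
    Multiset.map d Finset.univ.val = Multiset.map e Finset.univ.val := by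
  have h2 : ∏ i, (X - C (d i)) = ∏ i, (X - C (e i)) :=
    calc ∏ i, (X - C (d i)) = (diagonal d).charpoly := (charpoly_diag d).symm
      _ = (U * diagonal d * star U).charpoly := (charpoly_unitary_conj U hU _).symm
      _ = (V * diagonal e * star V).charpoly := by rw [h]
      _ = (diagonal e).charpoly := charpoly_unitary_conj V hV _
      _ = ∏ i, (X - C (e i)) := charpoly_diag e
  have h3 := congrArg Polynomial.roots h2
  rwa [roots_prod_lemma, roots_prod_lemma] at h3


lemma jacobi_iNonneg {n : ℕ} (hn : 1 ≤ n) (c : ℕ → ℂ) (hc : ∀ j, j < n - 1 → c j ≠ 0)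
    (M : Matrix (Fin n) (Fin n) ℂ)
    (hM : ∀ i j : Fin n, M i j = (if (j : ℕ) = (i : ℕ) + 1 then c (i : ℕ) else 0)
      + (if (i : ℕ) = (j : ℕ) + 1 then (starRingEnd ℂ) (c (j : ℕ)) else 0)) :
    iNonneg M = (n + 1) / 2 := by
  classical
  have hH : M.IsHermitian := by
    ext i j
    rw [conjTranspose_apply, hM i j, hM j i]
    split_ifs <;> simp [add_comm]
  -- mulVec formula
  have hmv : ∀ (x : Fin n → ℂ) (i : Fin n), M.mulVec x i =
      (if h : (i:ℕ)+1 < n then c i * x ⟨(i:ℕ)+1, h⟩ else 0)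
      + (if h : (i:ℕ)-1 < n ∧ (i:ℕ) ≠ 0 then (starRingEnd ℂ) (c ((i:ℕ)-1)) * x ⟨(i:ℕ)-1, h.1⟩ else 0) := by
    intro x i
    have h0 : M.mulVec x i = ∑ j, M i j * x j := by simp [Matrix.mulVec, dotProduct]
    have h1 : ∀ j : Fin n, M i j * x j = (if (j:ℕ) = (i:ℕ)+1 then c (i:ℕ) * x j else 0)
        + (if (i:ℕ) = (j:ℕ)+1 then (starRingEnd ℂ) (c ((i:ℕ)-1)) * x j else 0) := by
      intro j
      rw [hM, add_mul]
      congr 1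
      · split_ifs <;> simp
      · split_ifs with h
        · have hj : (j:ℕ) = (i:ℕ)-1 := by omega
          rw [hj]
        · simp
    rw [h0, Finset.sum_congr rfl (fun j _ => h1 j), Finset.sum_add_distrib,
      sum_ite_coe ((i:ℕ)+1) (fun j => c (i:ℕ) * x j),
      sum_ite_coe' (i:ℕ) (fun j => (starRingEnd ℂ) (c ((i:ℕ)-1)) * x j)]
  -- kernel
  have hker : ∀ x : Fin n → ℂ, M.mulVec x = 0 → x ⟨n-1, by omega⟩ = 0 → x = 0 := by
    intro x hx h0
    have claim : ∀ k, k < n → x ⟨n-1-k, by omega⟩ = 0 := by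
      intro k
      induction k using Nat.strong_induction_on with
      | _ k ih =>
        intro hk
        match k, hk with
        | 0, _ => exact h0
        | (k+1), hk =>
          have hr : n-(k+1) < n := by omega
          have heq := congrFun hx ⟨n-(k+1), hr⟩
          rw [hmv] at heq
          simp only [Pi.zero_apply] at heq
          have ht1 : (if h : (n-(k+1):ℕ)+1 < n then c (n-(k+1)) * x ⟨(n-(k+1):ℕ)+1, h⟩ else 0)
              = 0 := by
            by_cases h1 : (n-(k+1):ℕ)+1 < n
            · rw [dif_pos h1]
              have hih := ih (k-1) (by omega) (by omega)
              have hfe : (⟨n-1-(k-1), by omega⟩ : Fin n) = ⟨(n-(k+1):ℕ)+1, h1⟩ := by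
                ext
                simp only []
                omega
              rw [← hfe, hih, mul_zero]
            · rw [dif_neg h1]
          rw [ht1, zero_add] at heq
          rw [dif_pos (⟨by omega, by omega⟩ : (n-(k+1):ℕ)-1 < n ∧ (n-(k+1):ℕ) ≠ 0)] at heq
          rcases mul_eq_zero.mp heq with h | h
          · exact absurd (by simpa using h) (hc ((n-(k+1):ℕ)-1) (by omega))
          · have hfe : (⟨(n-(k+1):ℕ)-1, by omega⟩ : Fin n) = ⟨n-1-(k+1), by omega⟩ := by
              ext; simp only []; omega
            rw [hfe] at h
            exact h
    funext i
    have hcl := claim (n-1-(i:ℕ)) (by omega)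
    have hfe : (⟨n-1-(n-1-(i:ℕ)), by omega⟩ : Fin n) = i := by
      ext; simp only []; omega
    rwa [hfe] at hcl
  -- nullity at most 1
  have hnull : Module.finrank ℂ (LinearMap.ker M.mulVecLin) ≤ 1 := by
    have h1 : Module.finrank ℂ ℂ = 1 := Module.finrank_self ℂ
    rw [← h1]
    apply LinearMap.finrank_le_finrank_of_injective
      (f := (LinearMap.proj (⟨n-1, by omega⟩ : Fin n)).comp
        ((LinearMap.ker M.mulVecLin).subtype))
    rw [← LinearMap.ker_eq_bot, Submodule.eq_bot_iff]
    intro x hx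
    have hx1 : M.mulVec x.1 = 0 := by
      have h2 := x.2
      rwa [LinearMap.mem_ker, Matrix.mulVecLin_apply] at h2
    have hx0 : x.1 ⟨n-1, by omega⟩ = 0 := hx
    exact Subtype.ext (hker x.1 hx1 hx0)
  -- rank-nullity
  have hrn : M.rank + Module.finrank ℂ (LinearMap.ker M.mulVecLin) = n := by
    have h2 := LinearMap.finrank_range_add_finrank_ker M.mulVecLin
    rwa [Module.finrank_fin_fun] at h2
  have hrank : M.rank = (Finset.univ.filter fun i => ¬ hH.eigenvalues i = 0).card := by
    rw [hH.rank_eq_card_non_zero_eigs, Fintype.card_subtype]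
  -- spectral symmetry
  set ev := hH.eigenvalues with hev
  set S : Matrix (Fin n) (Fin n) ℂ := diagonal (fun i : Fin n => (-1 : ℂ)^(i:ℕ)) with hSdef
  have hSstar : star S = S := by
    rw [Matrix.star_eq_conjTranspose, hSdef, diagonal_conjTranspose]
    exact congrArg Matrix.diagonal (funext fun i => by
      show star ((-1:ℂ)^(i:ℕ)) = (-1:ℂ)^(i:ℕ)
      rw [star_pow, star_neg, star_one])
  have hSS : S * S = 1 := by
    rw [hSdef, diagonal_mul_diagonal]
    have h3 : (fun i : Fin n => (-1:ℂ)^(i:ℕ) * (-1)^(i:ℕ)) = fun _ => 1 := by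
      funext i
      rw [← pow_add]
      exact Even.neg_one_pow ⟨(i:ℕ), rfl⟩
    rw [h3, diagonal_one]
  have hSU : S ∈ Matrix.unitaryGroup (Fin n) ℂ := by
    rw [Matrix.mem_unitaryGroup_iff, hSstar, hSS]
  have hSMS : S * M * S = -M := by
    ext i j
    rw [Matrix.mul_diagonal, Matrix.diagonal_mul, Matrix.neg_apply]
    by_cases hij : (j:ℕ) = (i:ℕ)+1 ∨ (i:ℕ) = (j:ℕ)+1
    · have hodd : Odd ((i:ℕ)+(j:ℕ)) := by
        rcases hij with h | h
        · exact ⟨(i:ℕ), by omega⟩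
        · exact ⟨(j:ℕ), by omega⟩
      have hpow : (-1:ℂ)^((i:ℕ)+(j:ℕ)) = -1 := Odd.neg_one_pow hodd
      have h4 : (-1:ℂ)^(i:ℕ) * M i j * (-1)^(j:ℕ) = (-1:ℂ)^((i:ℕ)+(j:ℕ)) * M i j := by
        rw [pow_add]; ring
      rw [h4, hpow]; ring
    · push_neg at hij
      have h5 : M i j = 0 := by rw [hM, if_neg hij.1, if_neg hij.2, add_zero]
      rw [h5]; ring
  set U : Matrix (Fin n) (Fin n) ℂ := (hH.eigenvectorUnitary : Matrix (Fin n) (Fin n) ℂ)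
    with hUdef
  have hUm : U ∈ Matrix.unitaryGroup (Fin n) ℂ := SetLike.coe_mem _
  have hspec : M = U * diagonal (fun i => (RCLike.ofReal (ev i) : ℂ)) * star U :=
    hH.spectral_theorem
  have hDneg : diagonal (fun i : Fin n => (RCLike.ofReal (-ev i) : ℂ))
      = -(diagonal (fun i => (RCLike.ofReal (ev i) : ℂ))) := by
    rw [diagonal_neg]
    exact congrArg Matrix.diagonal (funext fun i => RCLike.ofReal_neg (ev i))
  have hMalt : (S * U) * diagonal (fun i : Fin n => (RCLike.ofReal (-ev i) : ℂ)) * star (S * U)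
      = M := by
    rw [Matrix.star_mul, hSstar, hDneg]
    have h2 : S * U * -(diagonal (fun i : Fin n => (RCLike.ofReal (ev i) : ℂ))) * (star U * S)
        = -(S * (U * diagonal (fun i : Fin n => (RCLike.ofReal (ev i) : ℂ)) * star U) * S) := by
      noncomm_ring
    rw [h2, ← hspec, hSMS, neg_neg]
  have key : Multiset.map (fun i => (RCLike.ofReal (ev i) : ℂ)) Finset.univ.val
      = Multiset.map (fun i => (RCLike.ofReal (-ev i) : ℂ)) Finset.univ.val := by
    apply eig_multiset_eq U (S * U) hUm (mul_mem hSU hUm)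
    rw [← hspec, hMalt]
  -- counting
  have hPN : (Finset.univ.filter fun i : Fin n => 0 < ev i).card
      = (Finset.univ.filter fun i : Fin n => ev i < 0).card := by
    have c1 := congrArg (Multiset.countP fun z : ℂ => 0 < RCLike.re z) key
    rw [Multiset.countP_map, Multiset.countP_map] at c1
    have l1 : Multiset.filter (fun i : Fin n => 0 < RCLike.re ((RCLike.ofReal (ev i)) : ℂ))
        Finset.univ.val = Multiset.filter (fun i : Fin n => 0 < ev i) Finset.univ.val := by
      apply Multiset.filter_congr
      intro i _
      rw [RCLike.ofReal_re]
    have l2 : Multiset.filter (fun i : Fin n => 0 < RCLike.re ((RCLike.ofReal (-ev i)) : ℂ))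
        Finset.univ.val = Multiset.filter (fun i : Fin n => ev i < 0) Finset.univ.val := by
      apply Multiset.filter_congr
      intro i _
      rw [RCLike.ofReal_re]
      exact neg_pos
    rw [l1, l2] at c1
    exact c1
  have hsplit1 : (Finset.univ.filter fun i : Fin n => 0 ≤ ev i).card
      = (Finset.univ.filter fun i : Fin n => 0 < ev i).card
        + (Finset.univ.filter fun i : Fin n => ev i = 0).card := by
    rw [← Finset.card_union_of_disjoint (by
      rw [Finset.disjoint_left]
      intro a h1 h2
      rw [Finset.mem_filter] at h1 h2
      exact h1.2.ne' h2.2), ← Finset.filter_or]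
    apply congrArg Finset.card
    apply Finset.filter_congr
    intro i _
    rw [le_iff_lt_or_eq, eq_comm]
  have hsplit2 : (Finset.univ.filter fun i : Fin n => ¬ ev i = 0).card
      = (Finset.univ.filter fun i : Fin n => 0 < ev i).card
        + (Finset.univ.filter fun i : Fin n => ev i < 0).card := by
    rw [← Finset.card_union_of_disjoint (by
      rw [Finset.disjoint_left]
      intro a h1 h2
      rw [Finset.mem_filter] at h1 h2
      exact absurd (h1.2.trans h2.2) (lt_irrefl 0)), ← Finset.filter_or]
    apply congrArg Finset.card
    apply Finset.filter_congr
    intro i _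
    constructor
    · intro h
      rcases lt_or_gt_of_ne (Ne.symm h)  with h' | h'
      · exact Or.inl h'
      · exact Or.inr h'
    · intro h
      rcases h with h | h
      · exact h.ne'
      · exact h.ne
  have hsplit3 : (Finset.univ.filter fun i : Fin n => ev i = 0).card
      + (Finset.univ.filter fun i : Fin n => ¬ ev i = 0).card = n := by
    rw [Finset.card_filter_add_card_filter_not (fun i : Fin n => ev i = 0)]
    simp
  unfold iNonneg
  rw [dif_pos hH]
  rw [show hH.eigenvalues = ev from rfl]
  omega


section part1
variable {n : ℕ} (hn : 1 ≤ n) (w : ℕ → ℂ) (hw : ∀ j, j < n - 1 → w j ≠ 0)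

include hn hw in
lemma superMat_ker : ∀ x : Fin n → ℂ, (superMat n w).mulVec x = 0 → x ⟨0, by omega⟩ = 0 → x = 0 := by
  intro x hx h0
  have hmv : ∀ i : Fin n, (superMat n w).mulVec x i
      = if h : (i:ℕ)+1 < n then w (i:ℕ) * x ⟨(i:ℕ)+1, h⟩ else 0 := by
    intro i
    have h1 : (superMat n w).mulVec x i = ∑ j, (superMat n w) i j * x j := by
      simp [Matrix.mulVec, dotProduct]
    have h2 : ∀ j : Fin n, (superMat n w) i j * x j
        = if (j:ℕ) = (i:ℕ)+1 then w (i:ℕ) * x j else 0 := by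
      intro j
      rw [superMat, Matrix.of_apply]
      split_ifs <;> simp
    rw [h1, Finset.sum_congr rfl (fun j _ => h2 j), sum_ite_coe ((i:ℕ)+1) (fun j => w (i:ℕ) * x j)]
  funext j
  by_cases hj : (j:ℕ) = 0
  · have : j = ⟨0, by omega⟩ := by ext; exact hj
    rw [this]; exact h0
  · have hjn : (j:ℕ) - 1 + 1 < n := by omega
    have heq := congrFun hx ⟨(j:ℕ)-1, by omega⟩
    rw [hmv] at heq
    simp only [Pi.zero_apply] at heq
    rw [dif_pos hjn] at heq
    rcases mul_eq_zero.mp heq with h | h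
    · exact absurd h (hw ((j:ℕ)-1) (by omega))
    · have hfe : (⟨(j:ℕ)-1+1, hjn⟩ : Fin n) = j := by ext; simp only [Fin.val_mk]; omega
      rwa [hfe] at h

include hn hw in
lemma superMat_ub (k : ℕ) (V : Matrix (Fin n) (Fin k) ℂ)
    (hV1 : Vᴴ * V = 1) (hV2 : Vᴴ * superMat n w * V = 0) : k ≤ (n+1)/2 := by
  set A := superMat n w with hA
  -- rank of V
  have hrV : V.rank = k := by
    apply le_antisymm
    · exact le_trans (Matrix.rank_le_card_width V) (by simp)
    · calc k = (1 : Matrix (Fin k) (Fin k) ℂ).rank := by rw [Matrix.rank_one, Fintype.card_fin]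
        _ = (Vᴴ * V).rank := by rw [hV1]
        _ ≤ V.rank := Matrix.rank_mul_le_right Vᴴ V
  have hrVH : Vᴴ.rank = k := by
    apply le_antisymm
    · exact le_trans (Matrix.rank_le_card_height Vᴴ) (by simp)
    · calc k = (Vᴴ * V).rank := by rw [hV1, Matrix.rank_one, Fintype.card_fin]
        _ ≤ Vᴴ.rank := Matrix.rank_mul_le_left Vᴴ V
  -- nullity of A*V at most 1
  have hnull : Module.finrank ℂ (LinearMap.ker (A*V).mulVecLin) ≤ 1 := by
    have h1 : Module.finrank ℂ ℂ = 1 := Module.finrank_self ℂ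
    rw [← h1]
    apply LinearMap.finrank_le_finrank_of_injective
      (f := (LinearMap.proj (⟨0, by omega⟩ : Fin n)).comp
        ((V.mulVecLin).comp ((LinearMap.ker (A*V).mulVecLin).subtype)))
    rw [← LinearMap.ker_eq_bot, Submodule.eq_bot_iff]
    intro x hx
    have hx1 : A.mulVec (V.mulVec x.1) = 0 := by
      have h2 := x.2
      rw [LinearMap.mem_ker, Matrix.mulVecLin_apply] at h2
      rw [Matrix.mulVec_mulVec]
      exact h2
    have hx0 : (V.mulVec x.1) ⟨0, by omega⟩ = 0 := hx
    have hVx : V.mulVec x.1 = 0 := superMat_ker hn w hw _ hx1 hx0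
    have : x.1 = 0 := by
      have h3 : (Vᴴ * V).mulVec x.1 = Vᴴ.mulVec (V.mulVec x.1) := (Matrix.mulVec_mulVec _ _ _).symm
      rw [hV1, hVx, Matrix.mulVec_zero, Matrix.one_mulVec] at h3
      exact h3
    exact Subtype.ext this
  -- rank-nullity for A*V
  have hrn1 : (A*V).rank + Module.finrank ℂ (LinearMap.ker (A*V).mulVecLin) = k := by
    have h2 := LinearMap.finrank_range_add_finrank_ker (A*V).mulVecLin
    rwa [Module.finrank_fin_fun] at h2
  -- range of A*V inside kernel of Vᴴ
  have hrange : LinearMap.range (A*V).mulVecLin ≤ LinearMap.ker Vᴴ.mulVecLin := by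
    rintro y ⟨x, rfl⟩
    rw [LinearMap.mem_ker, Matrix.mulVecLin_apply, Matrix.mulVecLin_apply, Matrix.mulVec_mulVec,
      ← Matrix.mul_assoc, hV2, Matrix.zero_mulVec]
  have hrn2 : Vᴴ.rank + Module.finrank ℂ (LinearMap.ker Vᴴ.mulVecLin) = n := by
    have h2 := LinearMap.finrank_range_add_finrank_ker Vᴴ.mulVecLin
    rwa [Module.finrank_fin_fun] at h2
  have h3 : (A*V).rank ≤ Module.finrank ℂ (LinearMap.ker Vᴴ.mulVecLin) :=
    Submodule.finrank_mono hrange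
  omega
end part1

section lower
variable {n : ℕ} (hn : 1 ≤ n)

lemma superMat_mem (w : ℕ → ℂ) :
    ∃ V : Matrix (Fin n) (Fin ((n+1)/2)) ℂ, Vᴴ * V = 1 ∧ Vᴴ * superMat n w * V = 0 := by
  have he2 : ∀ j : Fin ((n+1)/2), 2*(j:ℕ) < n := by
    intro j
    have := j.isLt
    omega
  set e : Fin ((n+1)/2) → Fin n := fun j => ⟨2*(j:ℕ), he2 j⟩ with hedef
  have heinj : Function.Injective e := by
    intro a b hab
    rw [hedef] at hab
    simp only [Fin.mk.injEq] at hab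
    ext
    omega
  set V : Matrix (Fin n) (Fin ((n+1)/2)) ℂ := Matrix.of fun i j => if i = e j then 1 else 0
    with hVdef
  have hkey : ∀ (N : Matrix (Fin n) (Fin n) ℂ) (a b : Fin ((n+1)/2)),
      (Vᴴ * N * V) a b = N (e a) (e b) := by
    intro N a b
    rw [Matrix.mul_apply]
    have h1 : ∀ i' : Fin n, (Vᴴ * N) a i' * V i' b
        = if i' = e b then (Vᴴ * N) a i' else 0 := by
      intro i'
      rw [hVdef, Matrix.of_apply]
      split_ifs <;> simp
    rw [Finset.sum_congr rfl (fun i' _ => h1 i'), Finset.sum_ite_eq' Finset.univ (e b)]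
    rw [if_pos (Finset.mem_univ _), Matrix.mul_apply]
    have h2 : ∀ i : Fin n, Vᴴ a i * N i (e b) = if i = e a then N i (e b) else 0 := by
      intro i
      rw [Matrix.conjTranspose_apply, hVdef, Matrix.of_apply]
      split_ifs <;> simp
    rw [Finset.sum_congr rfl (fun i _ => h2 i), Finset.sum_ite_eq' Finset.univ (e a)]
    rw [if_pos (Finset.mem_univ _)]
  refine ⟨V, ?_, ?_⟩
  · ext a b
    have h3 : Vᴴ * V = Vᴴ * (1 : Matrix (Fin n) (Fin n) ℂ) * V := by rw [Matrix.mul_one]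
    rw [h3, hkey 1 a b, Matrix.one_apply, Matrix.one_apply]
    by_cases hab : a = b
    · rw [if_pos hab, if_pos (by rw [hab])]
    · rw [if_neg hab, if_neg (fun hc => hab (heinj hc))]
  · ext a b
    rw [hkey (superMat n w) a b, Matrix.zero_apply, superMat, Matrix.of_apply, if_neg]
    rw [hedef]
    simp only [Fin.val_mk]
    omega
end lower

/-- Corollary 2.7. -/
theorem zdi_superMat {n : ℕ} (hn : 1 ≤ n) (w : ℕ → ℂ) (hw : ∀ j, j < n - 1 → w j ≠ 0) :
    zdi (superMat n w) = (n + 1) / 2 ∧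
    ∀ θ : ℝ, iNonneg (matRe (Complex.exp (-(θ : ℂ) * Complex.I) • superMat n w)) = (n + 1) / 2 := by
  constructor
  · unfold zdi
    have hub : ∀ k ∈ {k : ℕ | ∃ V : Matrix (Fin n) (Fin k) ℂ,
        Vᴴ * V = 1 ∧ Vᴴ * superMat n w * V = 0}, k ≤ (n+1)/2 := by
      rintro k ⟨V, hV1, hV2⟩
      exact superMat_ub hn w hw k V hV1 hV2
    have hmem : (n+1)/2 ∈ {k : ℕ | ∃ V : Matrix (Fin n) (Fin k) ℂ,
        Vᴴ * V = 1 ∧ Vᴴ * superMat n w * V = 0} := superMat_mem w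
    exact le_antisymm (csSup_le ⟨_, hmem⟩ hub) (le_csSup ⟨(n+1)/2, hub⟩ hmem)
  · intro θ
    set z := Complex.exp (-(θ:ℂ) * Complex.I) with hz
    apply jacobi_iNonneg hn (fun m => 2⁻¹ * z * w m)
    · intro j hj
      exact mul_ne_zero (mul_ne_zero (by norm_num) (by rw [hz]; exact Complex.exp_ne_zero _))
        (hw j hj)
    · intro i j
      simp only [matRe, superMat, Matrix.smul_apply, Matrix.add_apply,
        Matrix.conjTranspose_apply, Matrix.of_apply, smul_eq_mul]
      by_cases h1 : (j:ℕ) = (i:ℕ)+1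
      · rw [if_pos h1, if_pos h1, if_neg (by omega), if_neg (by omega)]
        simp only [mul_zero, star_zero, add_zero]
        ring
      · rw [if_neg h1, if_neg h1]
        by_cases h2 : (i:ℕ) = (j:ℕ)+1
        · rw [if_pos h2, if_pos h2]
          simp only [mul_zero, zero_add, star_mul', RCLike.star_def, _root_.map_mul, map_inv₀,
            Complex.conj_ofNat]
          ring
        · rw [if_neg h2, if_neg h2]
          simp
end

section
/- If A is an n-by-n complex matrix with d(A) > ⌊n/2⌋, then 0 is an eigenvalue of A with geometric multiplicity at least 2d(A) − n, i.e., dim ker A ≥ 2d(A) − n. Moreover, the bound ⌊n/2⌋ is sharp: for every n ≥ 1 there exists an n-by-n matrix A with d(A) = ⌊n/2⌋ such that 0 is not an eigenvalue of A. -/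
open Matrix Polynomial

/-- If `Vᴴ * V = 1` for an `n × k` matrix `V`, then `k ≤ n`. -/
lemma zdi_aux_iso_le {n k : ℕ} (V : Matrix (Fin n) (Fin k) ℂ) (h1 : Vᴴ * V = 1) : k ≤ n := by
  have hinj : Function.Injective V.mulVecLin := by
    intro x y hxy
    have := congrArg (Vᴴ.mulVecLin) hxy
    simpa [← Matrix.mulVecLin_mul, h1] using this
  have := LinearMap.finrank_le_finrank_of_injective hinj
  simpa using this

/-- The key compression bound: a `k`-dimensional zero compression forces
`2k - n` dimensions of kernel. -/
lemma zdi_aux_key {n k : ℕ} (A : Matrix (Fin n) (Fin n) ℂ) (V : Matrix (Fin n) (Fin k) ℂ)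
    (h1 : Vᴴ * V = 1) (h2 : Vᴴ * A * V = 0) :
    2 * k - n ≤ Module.finrank ℂ (LinearMap.ker A.mulVecLin) := by
  set φ := V.mulVecLin
  set ψ := Vᴴ.mulVecLin
  set α := A.mulVecLin
  have hψφ : ∀ x, ψ (φ x) = x := by
    intro x
    have e : ψ (φ x) = (Vᴴ * V).mulVecLin x := by
      rw [Matrix.mulVecLin_mul]; rfl
    rw [e, h1]; simp
  have hφinj : Function.Injective φ := fun x y hxy => by
    rw [← hψφ x, ← hψφ y, hxy]
  have hψsurj : Function.Surjective ψ := fun y => ⟨φ y, hψφ y⟩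
  have hzero : ∀ x, ψ (α (φ x)) = 0 := by
    intro x
    have e : ψ (α (φ x)) = (Vᴴ * A * V).mulVecLin x := by
      rw [Matrix.mulVecLin_mul, Matrix.mulVecLin_mul]; rfl
    rw [e, h2]; simp
  have hrankψ : Module.finrank ℂ (LinearMap.range ψ) = k := by
    rw [LinearMap.range_eq_top.mpr hψsurj]
    simp
  have hrnψ := LinearMap.finrank_range_add_finrank_ker ψ
  rw [hrankψ] at hrnψ
  simp only [Module.finrank_pi, Fintype.card_fin] at hrnψ
  have hαφ : LinearMap.range (α.comp φ) ≤ LinearMap.ker ψ := by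
    rintro _ ⟨x, rfl⟩
    exact hzero x
  have hle1 : Module.finrank ℂ (LinearMap.range (α.comp φ)) ≤
      Module.finrank ℂ (LinearMap.ker ψ) := Submodule.finrank_mono hαφ
  have hrnαφ := LinearMap.finrank_range_add_finrank_ker (α.comp φ)
  simp only [Module.finrank_pi, Fintype.card_fin] at hrnαφ
  have hmap : (LinearMap.ker (α.comp φ)).map φ ≤ LinearMap.ker α := by
    rintro _ ⟨x, hx, rfl⟩
    exact hx
  have hle2 : Module.finrank ℂ (LinearMap.ker (α.comp φ)) ≤
      Module.finrank ℂ (LinearMap.ker α) := by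
    calc Module.finrank ℂ (LinearMap.ker (α.comp φ))
        = Module.finrank ℂ ((LinearMap.ker (α.comp φ)).map φ) :=
          (Submodule.equivMapOfInjective φ hφinj _).finrank_eq
      _ ≤ Module.finrank ℂ (LinearMap.ker α) := Submodule.finrank_mono hmap
  omega

/-- The exchange (anti-diagonal) matrix is injective and admits a
`⌊m/2⌋`-dimensional zero compression. -/
lemma zdi_aux_example {m : ℕ} (hm : 1 ≤ m) : ∃ B : Matrix (Fin m) (Fin m) ℂ,
    (∀ x : Fin m → ℂ, B.mulVec x = 0 → x = 0) ∧
    (∃ V : Matrix (Fin m) (Fin (m/2)) ℂ, Vᴴ * V = 1 ∧ Vᴴ * B * V = 0) := by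
  set τ : Fin m → Fin m := fun i => ⟨m - 1 - i, by omega⟩ with hτ
  set B : Matrix (Fin m) (Fin m) ℂ := Matrix.of fun i j => if j = τ i then 1 else 0 with hB
  have hmul : ∀ (x : Fin m → ℂ) (i : Fin m), B.mulVec x i = x (τ i) := by
    intro x i
    simp [B, Matrix.mulVec, dotProduct, ite_mul]
  refine ⟨B, ?_, ?_⟩
  · intro x hx
    funext j
    have := congrFun hx (τ j)
    rw [hmul] at this
    have hττ : τ (τ j) = j := by
      have := j.isLt
      simp only [hτ, Fin.ext_iff]
      omega
    simpa [hττ] using this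
  · set ι : Fin (m/2) → Fin m := Fin.castLE (Nat.div_le_self m 2) with hι
    set V : Matrix (Fin m) (Fin (m/2)) ℂ := Matrix.of fun i a => if i = ι a then 1 else 0 with hV
    refine ⟨V, ?_, ?_⟩
    · ext a b
      simp only [Matrix.mul_apply, Matrix.conjTranspose_apply, V, Matrix.of_apply,
        Matrix.one_apply]
      simp only [apply_ite star, star_one, star_zero, ite_mul, one_mul, zero_mul]
      rw [Finset.sum_ite_eq' Finset.univ (ι a)]
      simp only [Finset.mem_univ, if_true, hι, Fin.castLE_inj]
    · ext a b
      simp only [Matrix.mul_apply, Matrix.conjTranspose_apply, V, Matrix.of_apply,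
        Matrix.zero_apply]
      simp only [apply_ite star, star_one, star_zero, ite_mul, one_mul, zero_mul,
        Finset.sum_ite_eq', Finset.mem_univ, if_true, mul_ite, mul_one, mul_zero]
      have ha := a.isLt
      have hb := b.isLt
      simp only [Finset.mem_univ, if_true, B, Matrix.of_apply, hτ, hι, Fin.ext_iff,
        Fin.coe_castLE]
      rw [if_neg (by omega)]

/-- Lemma 3.1. -/
theorem zdi_gt_half_zero_eigenvalue {n : ℕ} (A : Matrix (Fin n) (Fin n) ℂ) :
    (n / 2 < zdi A → 2 * zdi A - n ≤ Module.finrank ℂ (LinearMap.ker A.mulVecLin)) ∧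
    (∀ m : ℕ, 1 ≤ m → ∃ B : Matrix (Fin m) (Fin m) ℂ, zdi B = m / 2 ∧
      LinearMap.ker B.mulVecLin = ⊥) := by
  have main : ∀ (N : ℕ) (C : Matrix (Fin N) (Fin N) ℂ), N / 2 < zdi C →
      2 * zdi C - N ≤ Module.finrank ℂ (LinearMap.ker C.mulVecLin) := by
    intro N C _
    have hbdd : BddAbove
        {k : ℕ | ∃ V : Matrix (Fin N) (Fin k) ℂ, Vᴴ * V = 1 ∧ Vᴴ * C * V = 0} :=
      ⟨N, fun k ⟨V, h1, _⟩ => zdi_aux_iso_le V h1⟩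
    have hne : {k : ℕ | ∃ V : Matrix (Fin N) (Fin k) ℂ,
        Vᴴ * V = 1 ∧ Vᴴ * C * V = 0}.Nonempty :=
      ⟨0, (0 : Matrix (Fin N) (Fin 0) ℂ), Subsingleton.elim _ _, Subsingleton.elim _ _⟩
    obtain ⟨V, h1, h2⟩ := Nat.sSup_mem hne hbdd
    exact zdi_aux_key C V h1 h2
  refine ⟨main n A, ?_⟩
  intro m hm
  obtain ⟨B, hker, V, hV1, hV2⟩ := zdi_aux_example hm
  have hkerbot : LinearMap.ker B.mulVecLin = ⊥ := by
    rw [LinearMap.ker_eq_bot']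
    intro x hx
    exact hker x (by simpa [Matrix.mulVecLin_apply] using hx)
  refine ⟨B, ?_, hkerbot⟩
  have hbdd : BddAbove
      {k : ℕ | ∃ W : Matrix (Fin m) (Fin k) ℂ, Wᴴ * W = 1 ∧ Wᴴ * B * W = 0} :=
    ⟨m, fun k ⟨W, h1, _⟩ => zdi_aux_iso_le W h1⟩
  have hge : m / 2 ≤ zdi B := le_csSup hbdd ⟨V, hV1, hV2⟩
  have hle : zdi B ≤ m / 2 := by
    by_contra hlt
    push_neg at hlt
    have := main m B hlt
    rw [hkerbot] at this
    simp only [finrank_bot] at this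
    omega
  omega
end

section
/- Let A be an n-by-n nilpotent complex matrix with n ≥ 3. Then d(A) = n − 1 if and only if A is unitarily similar to a block-diagonal matrix C ⊕ 0_{n−3}, where C is the 3-by-3 matrix with entries C(1,2) = a, C(2,3) = b and all other entries 0, for some complex numbers a and b that are not both 0. -/
open Matrix Polynomial

namespace ZdiAux

def S {m : Type*} [Fintype m] (A : Matrix m m ℂ) : Set ℕ :=
  {k : ℕ | ∃ V : Matrix m (Fin k) ℂ, Vᴴ * V = 1 ∧ Vᴴ * A * V = 0}

open Finset in
section
lemma zdi_eq_sSup {m : Type*} [Fintype m] (A : Matrix m m ℂ) : zdi A = sSup (S A) := rfl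

lemma submatrix_one_of_inj {k l : Type*} [Fintype k] [DecidableEq k] [Fintype l]
    [DecidableEq l] (f : l → k) (hf : Function.Injective f) :
    (1 : Matrix k k ℂ).submatrix f f = 1 := by
  ext i j
  simp [Matrix.one_apply, hf.eq_iff]

lemma mem_S_mono {n : ℕ} (A : Matrix (Fin n) (Fin n) ℂ) {k m : ℕ} (h : m ≤ k)
    (hk : k ∈ S A) : m ∈ S A := by
  obtain ⟨V, hV1, hV2⟩ := hk
  refine ⟨V.submatrix id (Fin.castLE h), ?_, ?_⟩
  · have h1 := Matrix.submatrix_mul (Vᴴ) V (Fin.castLE h) (id : Fin n → Fin n)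
      (Fin.castLE h) Function.bijective_id
    rw [Matrix.conjTranspose_submatrix, ← h1, hV1]
    exact submatrix_one_of_inj _ (Fin.castLE_injective h)
  · have h1 := Matrix.submatrix_mul (Vᴴ) (A * V) (Fin.castLE h) (id : Fin n → Fin n)
      (Fin.castLE h) Function.bijective_id
    have h2 : A * V.submatrix id (Fin.castLE h) = (A * V).submatrix id (Fin.castLE h) := by
      have := Matrix.submatrix_mul A V (id : Fin n → Fin n) (id : Fin n → Fin n)
        (Fin.castLE h) Function.bijective_id
      simpa using this.symm
    rw [Matrix.conjTranspose_submatrix, Matrix.mul_assoc, h2, ← h1, ← Matrix.mul_assoc, hV2]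
    ext i j; simp

lemma zero_mem_S {n : ℕ} (A : Matrix (Fin n) (Fin n) ℂ) : 0 ∈ S A := by
  refine ⟨0, ?_, ?_⟩ <;> · ext i j; exact i.elim0

lemma mem_S_le {n : ℕ} (A : Matrix (Fin n) (Fin n) ℂ) {k : ℕ} (hk : k ∈ S A) : k ≤ n := by
  obtain ⟨V, hV1, _⟩ := hk
  have hinj : Function.Injective V.mulVecLin := by
    intro u v huv
    have h2 : Vᴴ *ᵥ (V *ᵥ u) = Vᴴ *ᵥ (V *ᵥ v) := by
      simpa [Matrix.mulVecLin] using congrArg (Vᴴ.mulVec) huv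
    simpa [Matrix.mulVec_mulVec, hV1] using h2
  have := LinearMap.finrank_le_finrank_of_injective hinj
  simpa [Module.finrank_fin_fun] using this

lemma bddAbove_S {n : ℕ} (A : Matrix (Fin n) (Fin n) ℂ) : BddAbove (S A) :=
  ⟨n, fun _ hk => mem_S_le A hk⟩

lemma eq_zero_of_n_mem_S {n : ℕ} {A : Matrix (Fin n) (Fin n) ℂ} (hk : n ∈ S A) : A = 0 := by
  obtain ⟨V, hV1, hV2⟩ := hk
  -- V is indexed by Fin n on both sides, via trivial reindex
  let e : Fin n ≃ Fin n := Equiv.refl _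
  have hV1' : Vᴴ * V = 1 := hV1
  have h2 : V * Vᴴ = 1 := mul_eq_one_comm.mp hV1'
  calc A = (V * Vᴴ) * A * (V * Vᴴ) := by rw [h2]; simp
    _ = V * (Vᴴ * A * V) * Vᴴ := by noncomm_ring
    _ = 0 := by rw [hV2]; simp

lemma vecMulVec_mul_vecMulVec (u v w z : Fin n → ℂ) :
    vecMulVec u v * vecMulVec w z = (v ⬝ᵥ w) • vecMulVec u z := by
  ext i j
  simp only [Matrix.mul_apply, vecMulVec_apply, Matrix.smul_apply, dotProduct, smul_eq_mul,
    Finset.sum_mul]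
  exact Finset.sum_congr rfl fun k _ => by ring

lemma trace_vecMulVec (u v : Fin n → ℂ) : (vecMulVec u v).trace = u ⬝ᵥ v := by
  simp [Matrix.trace, Matrix.diag, vecMulVec_apply, dotProduct]

lemma mul_vecMulVec_mul (P Q : Matrix (Fin n) (Fin n) ℂ) (u v : Fin n → ℂ) :
    P * vecMulVec u v * Q = vecMulVec (P *ᵥ u) (v ᵥ* Q) := by
  rw [vecMulVec_eq Unit, vecMulVec_eq Unit, Matrix.replicateCol_mulVec, Matrix.replicateRow_vecMul]
  simp only [Matrix.mul_assoc]

lemma trace_eq_zero_of_nilpotent {M : Matrix (Fin n) (Fin n) ℂ} (hM : IsNilpotent M) :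
    M.trace = 0 :=
  (Matrix.isNilpotent_trace_of_isNilpotent hM).eq_zero

lemma trace_sq_eq_zero_of_nilpotent {M : Matrix (Fin n) (Fin n) ℂ} (hM : IsNilpotent M) :
    (M * M).trace = 0 := by
  obtain ⟨k, hk⟩ := hM
  refine trace_eq_zero_of_nilpotent ⟨k, ?_⟩
  rw [← pow_two, ← pow_mul, mul_comm, pow_mul, hk]
  exact zero_pow two_ne_zero

lemma inner_eq_sum (x y : EuclideanSpace ℂ (Fin n)) :
    (inner ℂ x y : ℂ) = ∑ k, (starRingEnd ℂ) (x k) * y k := by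
  rw [PiLp.inner_apply]
  exact Finset.sum_congr rfl fun k _ => RCLike.inner_apply' _ _

/-- Matrix whose columns are the vectors `b j`. -/
def colMat (b : Fin n → EuclideanSpace ℂ (Fin n)) : Matrix (Fin n) (Fin n) ℂ :=
  Matrix.of fun i j => b j i

lemma colMat_def (b : Fin n → EuclideanSpace ℂ (Fin n)) (i j : Fin n) :
    colMat b i j = b j i := rfl

lemma colMat_mulVec_conj (b : Fin n → EuclideanSpace ℂ (Fin n)) (u : EuclideanSpace ℂ (Fin n))
    (i : Fin n) : ((colMat b)ᴴ *ᵥ (u : Fin n → ℂ)) i = (inner ℂ (b i) u : ℂ) := by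
  rw [inner_eq_sum]
  simp [Matrix.mulVec, dotProduct, colMat, Matrix.conjTranspose_apply]

lemma colMat_vecMul (b : Fin n → EuclideanSpace ℂ (Fin n)) (y : EuclideanSpace ℂ (Fin n))
    (w : Fin n → ℂ) (hw : ∀ k, w k = (starRingEnd ℂ) (y k)) (j : Fin n) :
    (w ᵥ* (colMat b)) j = (inner ℂ y (b j) : ℂ) := by
  rw [inner_eq_sum]
  simp [Matrix.vecMul, dotProduct, colMat, hw]

lemma colMat_unitary (b : OrthonormalBasis (Fin n) ℂ (EuclideanSpace ℂ (Fin n))) :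
    colMat (⇑b) ∈ Matrix.unitaryGroup (Fin n) ℂ := by
  rw [Matrix.mem_unitaryGroup_iff']
  ext i j
  have := (orthonormal_iff_ite (𝕜 := ℂ)).mp b.orthonormal i j
  rw [inner_eq_sum] at this
  simp only [Matrix.star_eq_conjTranspose, Matrix.mul_apply, Matrix.conjTranspose_apply,
    colMat, Matrix.of_apply, Matrix.one_apply]
  simpa using this

/-- Target pattern matrix. -/
def Tmat (n : ℕ) (a c : ℂ) : Matrix (Fin n) (Fin n) ℂ :=
  Matrix.of fun p q =>
    if (p : ℕ) = 0 ∧ (q : ℕ) = 1 then a else if (p : ℕ) = 1 ∧ (q : ℕ) = 2 then c else 0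

set_option maxHeartbeats 4000000 in
lemma key (hn : 3 ≤ n) (M : Matrix (Fin n) (Fin n) ℂ) (hM : IsNilpotent M)
    (hz : ∀ i j : Fin n, (i : ℕ) < n - 1 → (j : ℕ) < n - 1 → M i j = 0) :
    ∃ a c : ℂ, (a = 0 ∧ c = 0 → M = 0) ∧
      ∃ W ∈ Matrix.unitaryGroup (Fin n) ℂ, Wᴴ * M * W = Tmat n a c := by
  have hn0 : 0 < n := by omega
  set last : Fin n := ⟨n - 1, by omega⟩ with hlast
  have hlt : ∀ i : Fin n, i ≠ last ↔ (i : ℕ) < n - 1 := by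
    intro i
    have := i.isLt
    rw [Ne, Fin.ext_iff]
    show ¬ (i : ℕ) = n - 1 ↔ _
    constructor <;> (intro h; omega)
  -- M last last = 0
  have htr := trace_eq_zero_of_nilpotent hM
  have hll : M last last = 0 := by
    have h1 : M.trace = M last last := by
      rw [Matrix.trace]
      refine Finset.sum_eq_single_of_mem last (Finset.mem_univ _) fun i _ hi => ?_
      exact hz i i ((hlt i).mp hi) ((hlt i).mp hi)
    rw [h1] at htr; exact htr
  set x : Fin n → ℂ := fun k => M k last with hxdef
  set r : Fin n → ℂ := fun l => M last l with hrdef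
  set eb : Fin n → ℂ := fun k => if k = last then 1 else 0 with hebdef
  have hxlast : x last = 0 := hll
  have hrlast : r last = 0 := hll
  have hrep : M = vecMulVec x eb + vecMulVec eb r := by
    ext i j
    by_cases hi : i = last <;> by_cases hj : j = last
    · subst hi; subst hj
      simp [vecMulVec_apply, hxlast, hrlast, eb, hll]
    · subst hi
      simp [vecMulVec_apply, eb, hj, r]
    · subst hj
      simp [vecMulVec_apply, eb, hi, x]
    · simp only [Matrix.add_apply, vecMulVec_apply]
      rw [hz i j ((hlt i).mp hi) ((hlt j).mp hj)]
      simp [eb, hi, hj]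
  have hebx : eb ⬝ᵥ x = 0 := by
    simp [dotProduct, eb, hxlast]
  have hreb : r ⬝ᵥ eb = 0 := by
    simp [dotProduct, eb, hrlast]
  have hebeb : eb ⬝ᵥ eb = 1 := by
    simp [dotProduct, eb]
  have hxr : x ⬝ᵥ r = 0 := by
    have h2 := trace_sq_eq_zero_of_nilpotent hM
    rw [hrep] at h2
    rw [add_mul, mul_add, mul_add, vecMulVec_mul_vecMulVec, vecMulVec_mul_vecMulVec,
      vecMulVec_mul_vecMulVec, vecMulVec_mul_vecMulVec, hebx, hreb, hebeb] at h2
    simp only [zero_smul, one_smul, Matrix.trace_add, Matrix.trace_zero, Matrix.trace_smul,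
      trace_vecMulVec, zero_add, add_zero, smul_eq_mul, hebeb, mul_one] at h2
    have hcomm : r ⬝ᵥ x = x ⬝ᵥ r := dotProduct_comm r x
    rw [hcomm] at h2
    have : (2 : ℂ) * (x ⬝ᵥ r) = 0 := by ring_nf; ring_nf at h2; linear_combination h2
    simpa using this
  -- Euclidean space setup
  let X : EuclideanSpace ℂ (Fin n) := WithLp.toLp 2 x
  let Y : EuclideanSpace ℂ (Fin n) := WithLp.toLp 2 (star r)
  let Eb : EuclideanSpace ℂ (Fin n) := WithLp.toLp 2 eb
  set i0 : Fin n := ⟨0, by omega⟩ with hi0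
  set i1 : Fin n := ⟨1, by omega⟩ with hi1
  set i2 : Fin n := ⟨2, by omega⟩ with hi2
  have h01 : i0 ≠ i1 := by simp [hi0, hi1, Fin.ext_iff]
  have h02 : i0 ≠ i2 := by simp [hi0, hi2, Fin.ext_iff]
  have h12 : i1 ≠ i2 := by simp [hi1, hi2, Fin.ext_iff]
  have hIEbEb : (inner ℂ Eb Eb : ℂ) = 1 := by
    rw [inner_eq_sum]
    simp [Eb, eb, apply_ite (starRingEnd ℂ)]
  have hIEbX : (inner ℂ Eb X : ℂ) = 0 := by
    rw [inner_eq_sum]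
    simp [Eb, eb, X, apply_ite (starRingEnd ℂ), hxlast]
  have hIXEb : (inner ℂ X Eb : ℂ) = 0 := by
    rw [inner_eq_sum]
    simp only [Eb, eb, X, PiLp.toLp_apply, mul_ite, mul_one, mul_zero]
    simpa [hxlast] using Finset.sum_ite_eq' Finset.univ last fun k => (starRingEnd ℂ) (x k)
  have hIEbY : (inner ℂ Eb Y : ℂ) = 0 := by
    rw [inner_eq_sum]
    simp [Eb, eb, Y, apply_ite (starRingEnd ℂ), hrlast]
  have hIYEb : (inner ℂ Y Eb : ℂ) = 0 := by
    rw [inner_eq_sum]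
    simp only [Eb, eb, Y, PiLp.toLp_apply, mul_ite, mul_one, mul_zero]
    have := Finset.sum_ite_eq' Finset.univ last fun k => (starRingEnd ℂ) (star r k)
    simpa [hrlast] using this
  have hIXY : (inner ℂ X Y : ℂ) = 0 := by
    rw [inner_eq_sum]
    have : ∀ k, (starRingEnd ℂ) (X k) * Y k = (starRingEnd ℂ) (x k * r k) := by
      intro k; simp [X, Y, Pi.star_apply, _root_.map_mul]
    rw [Finset.sum_congr rfl fun k _ => this k, ← map_sum]
    have : ∑ k, x k * r k = x ⬝ᵥ r := rfl
    rw [this, hxr, map_zero]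
  have hIYX : (inner ℂ Y X : ℂ) = 0 := by
    rw [inner_eq_sum]
    have : ∀ k, (starRingEnd ℂ) (Y k) * X k = r k * x k := by
      intro k; simp [X, Y, Pi.star_apply]
    rw [Finset.sum_congr rfl fun k _ => this k]
    have : ∑ k, r k * x k = r ⬝ᵥ x := rfl
    rw [this, dotProduct_comm, hxr]
  have hIXX : (inner ℂ X X : ℂ) = (‖X‖ : ℂ) ^ 2 := inner_self_eq_norm_sq_to_K X
  have hIYY : (inner ℂ Y Y : ℂ) = (‖Y‖ : ℂ) ^ 2 := inner_self_eq_norm_sq_to_K Y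
  set sset : Set (Fin n) := {i | (i = i0 ∧ x ≠ 0) ∨ i = i1 ∨ (i = i2 ∧ r ≠ 0)} with hsset
  set v : Fin n → EuclideanSpace ℂ (Fin n) := fun i =>
    if i = i0 then ((‖X‖ : ℂ)⁻¹ • X) else if i = i1 then Eb
      else if i = i2 then ((‖Y‖ : ℂ)⁻¹ • Y) else 0 with hvdef
  have hvi0 : v i0 = (‖X‖ : ℂ)⁻¹ • X := by simp [hvdef]
  have hvi1 : v i1 = Eb := by simp [hvdef, h01.symm]
  have hvi2 : v i2 = (‖Y‖ : ℂ)⁻¹ • Y := by simp [hvdef, h02.symm, h12.symm]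
  have hXne : x ≠ 0 → (‖X‖ : ℂ) ≠ 0 := by
    intro hx0
    have : X ≠ 0 := fun h => hx0 (congrArg WithLp.ofLp h)
    simpa using (norm_ne_zero_iff.mpr this)
  have hYne : r ≠ 0 → (‖Y‖ : ℂ) ≠ 0 := by
    intro hr0
    have : Y ≠ 0 := by
      intro h
      have h' : (star r : Fin n → ℂ) = 0 := congrArg WithLp.ofLp h
      have h2 := congrArg star h'
      rw [star_star, star_zero] at h2
      exact hr0 h2
    simpa using (norm_ne_zero_iff.mpr this)
  have honb : Orthonormal ℂ (sset.restrict v) := by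
    rw [orthonormal_iff_ite]
    rintro ⟨i, hi⟩ ⟨j, hj⟩
    simp only [Set.restrict_apply, Set.restrict, Subtype.mk.injEq]
    rcases hi with ⟨rfl, hx0⟩ | rfl | ⟨rfl, hr0⟩ <;>
      rcases hj with ⟨rfl, hx0'⟩ | rfl | ⟨rfl, hr0'⟩
    · rw [hvi0, if_pos rfl, inner_smul_left, inner_smul_right, hIXX]
      have hne := hXne hx0
      rw [map_inv₀, Complex.conj_ofReal]
      field_simp
    · rw [hvi0, hvi1, if_neg h01, inner_smul_left, hIXEb, mul_zero]
    · rw [hvi0, hvi2, if_neg h02, inner_smul_left, inner_smul_right, hIXY]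
      ring
    · rw [hvi0, hvi1, if_neg (Ne.symm h01), inner_smul_right, hIEbX]
      ring
    · rw [hvi1, if_pos rfl, hIEbEb]
    · rw [hvi1, hvi2, if_neg h12, inner_smul_right, hIEbY]
      ring
    · rw [hvi0, hvi2, if_neg (Ne.symm h02), inner_smul_left, inner_smul_right, hIYX]
      ring
    · rw [hvi1, hvi2, if_neg (Ne.symm h12), inner_smul_left, hIYEb]
      ring
    · rw [hvi2, if_pos rfl, inner_smul_left, inner_smul_right, hIYY]
      have hne := hYne hr0
      rw [map_inv₀, Complex.conj_ofReal]
      field_simp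
  have hcard : Module.finrank ℂ (EuclideanSpace ℂ (Fin n)) = Fintype.card (Fin n) := by
    simp [finrank_euclideanSpace_fin]
  obtain ⟨b, hb⟩ := honb.exists_orthonormalBasis_extension_of_card_eq hcard
  have hb1 : b i1 = Eb := by rw [hb i1 (Or.inr (Or.inl rfl))]; exact hvi1
  have hXa : ∃ a : ℂ, X = a • b i0 ∧ (a = 0 → x = 0) := by
    by_cases hx0 : x = 0
    · exact ⟨0, by rw [zero_smul]; exact congrArg (WithLp.toLp 2) hx0, fun _ => hx0⟩
    · refine ⟨(‖X‖ : ℂ), ?_, fun h => absurd h (hXne hx0)⟩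
      rw [hb i0 (Or.inl ⟨rfl, hx0⟩), hvi0, smul_inv_smul₀ (hXne hx0)]
  have hYc : ∃ c : ℂ, Y = c • b i2 ∧ (c = 0 → r = 0) := by
    by_cases hr0 : r = 0
    · refine ⟨0, by rw [zero_smul]; show WithLp.toLp 2 (star r) = WithLp.toLp 2 0; rw [hr0, star_zero], fun _ => hr0⟩
    · refine ⟨(‖Y‖ : ℂ), ?_, fun h => absurd h (hYne hr0)⟩
      rw [hb i2 (Or.inr (Or.inr ⟨rfl, hr0⟩)), hvi2, smul_inv_smul₀ (hYne hr0)]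
  obtain ⟨a, hXa, ha0⟩ := hXa
  obtain ⟨c, hYc, hc0⟩ := hYc
  have hbo := (orthonormal_iff_ite (𝕜 := ℂ)).mp b.orthonormal
  refine ⟨a, (starRingEnd ℂ) c, ?_, colMat (⇑b), colMat_unitary b, ?_⟩
  · rintro ⟨ha, hc⟩
    have hx0 : x = 0 := ha0 ha
    have hr0 : r = 0 := hc0 (by simpa using congrArg (starRingEnd ℂ) hc)
    rw [hrep, hx0, hr0]
    ext i j
    simp [vecMulVec_apply]
  · set W := colMat (⇑b) with hW
    rw [hrep, Matrix.mul_add, Matrix.add_mul, mul_vecMulVec_mul, mul_vecMulVec_mul]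
    have hWx : Wᴴ *ᵥ x = fun i => if i = i0 then a else 0 := by
      funext i
      rw [show (Wᴴ *ᵥ x) i = (inner ℂ (b i) X : ℂ) from colMat_mulVec_conj (⇑b) X i,
        hXa, inner_smul_right, hbo i i0]
      by_cases h : i = i0 <;> simp [h]
    have hWeb : Wᴴ *ᵥ eb = fun i => if i = i1 then 1 else 0 := by
      funext i
      rw [show (Wᴴ *ᵥ eb) i = (inner ℂ (b i) Eb : ℂ) from colMat_mulVec_conj (⇑b) Eb i,
        ← hb1, hbo i i1]
    have hebW : eb ᵥ* W = fun j => if j = i1 then 1 else 0 := by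
      funext j
      have h1 : ∀ k, eb k = (starRingEnd ℂ) (Eb k) := by
        intro k
        simp [Eb, eb, apply_ite (starRingEnd ℂ)]
      rw [show (eb ᵥ* W) j = (inner ℂ Eb (b j) : ℂ) from
        colMat_vecMul (⇑b) Eb eb h1 j, ← hb1, hbo i1 j]
      by_cases h : j = i1 <;> simp [h, eq_comm]
    have hrW : r ᵥ* W = fun j => if j = i2 then (starRingEnd ℂ) c else 0 := by
      funext j
      have h1 : ∀ k, r k = (starRingEnd ℂ) (Y k) := by
        intro k
        simp [Y, Pi.star_apply, Complex.conj_conj]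
      rw [show (r ᵥ* W) j = (inner ℂ Y (b j) : ℂ) from
        colMat_vecMul (⇑b) Y r h1 j, hYc, inner_smul_left, hbo i2 j]
      by_cases h : j = i2 <;> simp [h, eq_comm]
    rw [hWx, hWeb, hebW, hrW]
    ext p q
    simp only [Matrix.add_apply, vecMulVec_apply, Tmat, Matrix.of_apply]
    have hp0 : (p = i0) ↔ (p : ℕ) = 0 := by rw [Fin.ext_iff]
    have hp1 : (p = i1) ↔ (p : ℕ) = 1 := by rw [Fin.ext_iff]
    have hq1 : (q = i1) ↔ (q : ℕ) = 1 := by rw [Fin.ext_iff]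
    have hq2 : (q = i2) ↔ (q : ℕ) = 2 := by rw [Fin.ext_iff]
    simp only [hp0, hp1, hq1, hq2]
    by_cases e1 : (p : ℕ) = 0
    · have e3 : ¬(p : ℕ) = 1 := by omega
      by_cases e2 : (q : ℕ) = 1 <;> simp [e1, e2, e3]
    · by_cases e3 : (p : ℕ) = 1
      · by_cases e4 : (q : ℕ) = 2 <;> simp [e1, e3, e4]
      · simp [e1, e3]
lemma isNilpotent_conj {U A : Matrix (Fin n) (Fin n) ℂ}
    (hU : U ∈ Matrix.unitaryGroup (Fin n) ℂ) (hA : IsNilpotent A) :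
    IsNilpotent (Uᴴ * A * U) := by
  have h1 : Uᴴ * U = 1 := by
    have := Matrix.mem_unitaryGroup_iff'.mp hU
    rwa [Matrix.star_eq_conjTranspose] at this
  have h2 : U * Uᴴ = 1 := mul_eq_one_comm.mp h1
  obtain ⟨k, hk⟩ := hA
  refine ⟨k, ?_⟩
  have key : ∀ m : ℕ, (Uᴴ * A * U) ^ m = Uᴴ * A ^ m * U := by
    intro m
    induction m with
    | zero => simp [h1]
    | succ m ih =>
      rw [pow_succ, ih, pow_succ]
      calc Uᴴ * A ^ m * U * (Uᴴ * A * U) = Uᴴ * A ^ m * (U * Uᴴ) * A * U := by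
            noncomm_ring
        _ = Uᴴ * (A ^ m * A) * U := by rw [h2]; noncomm_ring
  rw [key, hk]
  simp

lemma colMat_conj_entry (b : Fin n → EuclideanSpace ℂ (Fin n)) (Mx : Matrix (Fin n) (Fin n) ℂ)
    (i j : Fin n) : ((colMat b)ᴴ * Mx * colMat b) i j
      = ∑ l, (∑ k, (starRingEnd ℂ) (b i k) * Mx k l) * b j l := by
  simp only [Matrix.mul_apply, Matrix.conjTranspose_apply, colMat_def]
  rfl

lemma exists_unitary_compress (hn : 3 ≤ n) (A : Matrix (Fin n) (Fin n) ℂ)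
    (V : Matrix (Fin n) (Fin (n - 1)) ℂ) (hV1 : Vᴴ * V = 1) (hV2 : Vᴴ * A * V = 0) :
    ∃ U ∈ Matrix.unitaryGroup (Fin n) ℂ,
      ∀ i j : Fin n, (i : ℕ) < n - 1 → (j : ℕ) < n - 1 → (Uᴴ * A * U) i j = 0 := by
  set sset : Set (Fin n) := {i | (i : ℕ) < n - 1} with hsset
  set v : Fin n → EuclideanSpace ℂ (Fin n) := fun i =>
    if h : (i : ℕ) < n - 1 then WithLp.toLp 2 (fun k => V k ⟨(i : ℕ), h⟩) else 0 with hvdef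
  have honb : Orthonormal ℂ (sset.restrict v) := by
    rw [orthonormal_iff_ite]
    rintro ⟨i, hi⟩ ⟨j, hj⟩
    simp only [Set.restrict_apply, Set.restrict, Subtype.mk.injEq]
    have hi' : (i : ℕ) < n - 1 := hi
    have hj' : (j : ℕ) < n - 1 := hj
    rw [inner_eq_sum, hvdef]
    simp only [Set.restrict, dif_pos hi', dif_pos hj', PiLp.toLp_apply]
    have h1 : ∀ k, (starRingEnd ℂ) (V k ⟨(i : ℕ), hi'⟩) * V k ⟨(j : ℕ), hj'⟩
        = Vᴴ ⟨(i : ℕ), hi'⟩ k * V k ⟨(j : ℕ), hj'⟩ := fun k => rfl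
    rw [Finset.sum_congr rfl fun k _ => h1 k, ← Matrix.mul_apply, hV1, Matrix.one_apply]
    congr 1
    simp [Fin.ext_iff]
  have hcard : Module.finrank ℂ (EuclideanSpace ℂ (Fin n)) = Fintype.card (Fin n) := by
    simp [finrank_euclideanSpace_fin]
  obtain ⟨b, hb⟩ := honb.exists_orthonormalBasis_extension_of_card_eq hcard
  refine ⟨colMat (⇑b), colMat_unitary b, fun i j hi hj => ?_⟩
  rw [colMat_conj_entry]
  have hbi : ⇑b i = v i := hb i hi
  have hbj : ⇑b j = v j := hb j hj
  rw [hbi, hbj, hvdef]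
  simp only
  rw [dif_pos hi, dif_pos hj]
  simp only [PiLp.toLp_apply]
  have h2 : ∀ l, (∑ k, (starRingEnd ℂ) (V k ⟨(i : ℕ), hi⟩) * A k l) * V l ⟨(j : ℕ), hj⟩
      = (Vᴴ * A) ⟨(i : ℕ), hi⟩ l * V l ⟨(j : ℕ), hj⟩ := by
    intro l
    rw [Matrix.mul_apply]
    rfl
  rw [Finset.sum_congr rfl fun l _ => h2 l, ← Matrix.mul_apply, hV2]
  rfl
section Reindex

variable {K : Type*} [Fintype K] [DecidableEq K]

lemma reindex_mul (e : Fin n ≃ K) (P Q : Matrix (Fin n) (Fin n) ℂ) :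
    (Matrix.reindex e e P) * (Matrix.reindex e e Q) = Matrix.reindex e e (P * Q) := by
  simp only [Matrix.reindex_apply]
  exact Matrix.submatrix_mul_equiv P Q _ e.symm _

lemma reindex_conjTranspose (e : Fin n ≃ K) (P : Matrix (Fin n) (Fin n) ℂ) :
    (Matrix.reindex e e P)ᴴ = Matrix.reindex e e Pᴴ := by
  simp [Matrix.reindex_apply, Matrix.conjTranspose_submatrix]

lemma reindex_unitary (e : Fin n ≃ K) {U : Matrix (Fin n) (Fin n) ℂ}
    (hU : U ∈ Matrix.unitaryGroup (Fin n) ℂ) :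
    Matrix.reindex e e U ∈ Matrix.unitaryGroup K ℂ := by
  have h1 : Uᴴ * U = 1 := by
    have := Matrix.mem_unitaryGroup_iff'.mp hU
    rwa [Matrix.star_eq_conjTranspose] at this
  rw [Matrix.mem_unitaryGroup_iff', Matrix.star_eq_conjTranspose, reindex_conjTranspose,
    reindex_mul, h1]
  simp only [Matrix.reindex_apply]
  exact submatrix_one_of_inj _ e.symm.injective

end Reindex

/-- The reindexing equivalence. -/
def eqv (hn : 3 ≤ n) : Fin n ≃ (Fin 3 ⊕ Fin (n - 3)) :=
  (finCongr (by omega : n = 3 + (n - 3))).trans finSumFinEquiv.symm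

lemma eqv_symm_inl (hn : 3 ≤ n) (i : Fin 3) : (((eqv hn).symm (Sum.inl i)) : ℕ) = (i : ℕ) := by
  simp [eqv, finCongr]

lemma eqv_symm_inr (hn : 3 ≤ n) (j : Fin (n - 3)) :
    (((eqv hn).symm (Sum.inr j)) : ℕ) = 3 + (j : ℕ) := by
  simp [eqv, finCongr]

lemma reindex_Tmat (hn : 3 ≤ n) (a c : ℂ) :
    Matrix.reindex (eqv hn) (eqv hn) (Tmat n a c)
      = Matrix.fromBlocks !![0, a, 0; 0, 0, c; 0, 0, 0] 0 0
          (0 : Matrix (Fin (n - 3)) (Fin (n - 3)) ℂ) := by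
  ext p q
  rcases p with i | i <;> rcases q with j | j <;>
    simp only [Matrix.reindex_apply, Matrix.submatrix_apply, Tmat, Matrix.of_apply,
      eqv_symm_inl, eqv_symm_inr, Matrix.fromBlocks_apply₁₁, Matrix.fromBlocks_apply₁₂,
      Matrix.fromBlocks_apply₂₁, Matrix.fromBlocks_apply₂₂]
  · fin_cases i <;> fin_cases j <;> simp [Matrix.vecHead, Matrix.vecTail]
  · split_ifs with h1 h2 <;> first | (exfalso; omega) | simp
  · split_ifs with h1 h2 <;> first | (exfalso; omega) | simp
  · split_ifs with h1 h2 <;> first | (exfalso; omega) | simp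
lemma unitSimG_extract {K : Type*} [Fintype K] [DecidableEq K] (A : Matrix (Fin n) (Fin n) ℂ)
    (B : Matrix K K ℂ) (e : Fin n ≃ K) (U : Matrix K K ℂ)
    (hU : U ∈ Matrix.unitaryGroup K ℂ) (hB : Uᴴ * (Matrix.reindex e e A) * U = B) :
    ∃ U' : Matrix (Fin n) K ℂ, U'ᴴ * U' = 1 ∧ U'ᴴ * A * U' = B := by
  have hU1 : Uᴴ * U = 1 := by
    have := Matrix.mem_unitaryGroup_iff'.mp hU
    rwa [Matrix.star_eq_conjTranspose] at this
  refine ⟨U.submatrix ⇑e id, ?_, ?_⟩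
  · rw [Matrix.conjTranspose_submatrix,
      Matrix.submatrix_mul_equiv Uᴴ U (id : K → K) e (id : K → K), hU1,
      Matrix.submatrix_id_id]
  · have hA : A = (Matrix.reindex e e A).submatrix ⇑e ⇑e := by
      simp [Matrix.reindex_apply, Matrix.submatrix_submatrix]
    rw [Matrix.conjTranspose_submatrix,
      show (Uᴴ.submatrix (id : K → K) ⇑e) * A * U.submatrix ⇑e (id : K → K)
        = (Uᴴ.submatrix (id : K → K) ⇑e) * ((Matrix.reindex e e A).submatrix ⇑e ⇑e)
          * U.submatrix ⇑e (id : K → K) from by rw [← hA],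
      Matrix.submatrix_mul_equiv Uᴴ (Matrix.reindex e e A) (id : K → K) e ⇑e,
      Matrix.submatrix_mul_equiv (Uᴴ * (Matrix.reindex e e A)) U (id : K → K) e (id : K → K),
      hB, Matrix.submatrix_id_id]

/-- Column selection map. -/
def fsel (hn : 3 ≤ n) : Fin (n - 1) → (Fin 3 ⊕ Fin (n - 3)) := fun j =>
  if h0 : (j : ℕ) = 0 then Sum.inl 0 else if h1 : (j : ℕ) = 1 then Sum.inl 2
    else Sum.inr ⟨(j : ℕ) - 2, by omega⟩

lemma fsel_inj (hn : 3 ≤ n) : Function.Injective (fsel hn) := by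
  intro j1 j2 h
  unfold fsel at h
  split_ifs at h <;> simp_all [Fin.ext_iff] <;> omega

lemma fsel_B (hn : 3 ≤ n) (a c : ℂ) (i j : Fin (n - 1)) :
    (Matrix.fromBlocks !![0, a, 0; 0, 0, c; 0, 0, 0] 0 0
      (0 : Matrix (Fin (n - 3)) (Fin (n - 3)) ℂ)) (fsel hn i) (fsel hn j) = 0 := by
  unfold fsel
  split_ifs <;> simp [Matrix.fromBlocks, Matrix.vecHead, Matrix.vecTail]

lemma sel_compress {K : Type*} [Fintype K] [DecidableEq K] (f : Fin (n - 1) → K)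
    (hf : Function.Injective f) (B : Matrix K K ℂ) (hB : ∀ i j, B (f i) (f j) = 0) :
    ∃ V₀ : Matrix K (Fin (n - 1)) ℂ, V₀ᴴ * V₀ = 1 ∧ V₀ᴴ * B * V₀ = 0 := by
  refine ⟨Matrix.of fun i j => if i = f j then 1 else 0, ?_, ?_⟩
  · ext i j
    simp only [Matrix.mul_apply, Matrix.conjTranspose_apply, Matrix.of_apply,
      apply_ite (star : ℂ → ℂ), star_one, star_zero, ite_mul, one_mul, zero_mul]
    rw [Finset.sum_ite_eq' Finset.univ (f i) (fun k => if k = f j then (1 : ℂ) else 0)]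
    simp [Matrix.one_apply, hf.eq_iff, eq_comm]
  · ext i j
    simp only [Matrix.mul_apply, Matrix.conjTranspose_apply, Matrix.of_apply,
      apply_ite (star : ℂ → ℂ), star_one, star_zero, ite_mul, one_mul, zero_mul,
      mul_ite, mul_one, mul_zero]
    rw [Finset.sum_ite_eq' Finset.univ (f j)
      (fun l => ∑ k, if k = f i then B k l else 0)]
    simp only [Finset.mem_univ, if_true]
    rw [Finset.sum_ite_eq' Finset.univ (f i) (fun k => B k (f j))]
    simp [hB]

end
end ZdiAux

/-- Corollary 3.5. -/
theorem zdi_eq_n_sub_one_iff_of_nilpotent {n : ℕ} (hn : 3 ≤ n)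
    (A : Matrix (Fin n) (Fin n) ℂ) (hA : IsNilpotent A) :
    zdi A = n - 1 ↔
    ∃ a b : ℂ, ¬(a = 0 ∧ b = 0) ∧
      UnitSimG A (Matrix.fromBlocks !![0, a, 0; 0, 0, b; 0, 0, 0] 0 0
        (0 : Matrix (Fin (n - 3)) (Fin (n - 3)) ℂ)) := by
  constructor
  · intro h
    have hne : (ZdiAux.S A).Nonempty := ⟨0, ZdiAux.zero_mem_S A⟩
    have hbdd := ZdiAux.bddAbove_S A
    have hsup : sSup (ZdiAux.S A) = n - 1 := h
    have hmem : n - 1 ∈ ZdiAux.S A := hsup ▸ Nat.sSup_mem hne hbdd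
    have hA0 : A ≠ 0 := by
      intro h0
      have hnmem : n ∈ ZdiAux.S A := ⟨1, by simp, by simp [h0]⟩
      have hle : n ≤ sSup (ZdiAux.S A) := le_csSup hbdd hnmem
      rw [hsup] at hle
      omega
    obtain ⟨V, hV1, hV2⟩ := hmem
    obtain ⟨U, hU, hUz⟩ := ZdiAux.exists_unitary_compress hn A V hV1 hV2
    have hMnil : IsNilpotent (Uᴴ * A * U) := ZdiAux.isNilpotent_conj hU hA
    obtain ⟨a, c, habz, W, hW, hWM⟩ := ZdiAux.key hn (Uᴴ * A * U) hMnil hUz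
    have hU1 : Uᴴ * U = 1 := by
      have := Matrix.mem_unitaryGroup_iff'.mp hU
      rwa [Matrix.star_eq_conjTranspose] at this
    have hU2 : U * Uᴴ = 1 := mul_eq_one_comm.mp hU1
    refine ⟨a, c, ?_, ZdiAux.eqv hn,
      Matrix.reindex (ZdiAux.eqv hn) (ZdiAux.eqv hn) (U * W),
      ZdiAux.reindex_unitary _ (mul_mem hU hW), ?_⟩
    · rintro ⟨ha, hc⟩
      have hM0 : Uᴴ * A * U = 0 := habz ⟨ha, hc⟩
      apply hA0
      calc A = (U * Uᴴ) * A * (U * Uᴴ) := by rw [hU2]; simp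
        _ = U * (Uᴴ * A * U) * Uᴴ := by noncomm_ring
        _ = 0 := by rw [hM0]; simp
    · rw [ZdiAux.reindex_conjTranspose, ZdiAux.reindex_mul, ZdiAux.reindex_mul,
        ← ZdiAux.reindex_Tmat hn a c]
      congr 1
      rw [Matrix.conjTranspose_mul]
      calc Wᴴ * Uᴴ * A * (U * W) = Wᴴ * (Uᴴ * A * U) * W := by noncomm_ring
        _ = ZdiAux.Tmat n a c := hWM
  · rintro ⟨a, c, hab, e, U, hU, hB⟩
    set B := Matrix.fromBlocks !![0, a, 0; 0, 0, c; 0, 0, 0] 0 0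
      (0 : Matrix (Fin (n - 3)) (Fin (n - 3)) ℂ) with hBdef
    obtain ⟨U', hU'1, hU'A⟩ := ZdiAux.unitSimG_extract A B e U hU hB
    have hA0 : A ≠ 0 := by
      intro h0
      have hBz : B = 0 := by rw [← hU'A, h0]; simp
      apply hab
      constructor
      · calc a = B (Sum.inl 0) (Sum.inl 1) := by simp [hBdef]
          _ = 0 := by rw [hBz]; rfl
      · calc c = B (Sum.inl 1) (Sum.inl 2) := by simp [hBdef]
          _ = 0 := by rw [hBz]; rfl
    have hmem : n - 1 ∈ ZdiAux.S A := by
      obtain ⟨V₀, hV01, hV0B⟩ := ZdiAux.sel_compress (ZdiAux.fsel hn) (ZdiAux.fsel_inj hn) B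
        (fun i j => ZdiAux.fsel_B hn a c i j)
      refine ⟨U' * V₀, ?_, ?_⟩
      · rw [Matrix.conjTranspose_mul]
        calc V₀ᴴ * U'ᴴ * (U' * V₀) = V₀ᴴ * (U'ᴴ * U') * V₀ := by
              simp only [Matrix.mul_assoc]
          _ = V₀ᴴ * V₀ := by rw [hU'1, Matrix.mul_one]
          _ = 1 := hV01
      · rw [Matrix.conjTranspose_mul]
        calc V₀ᴴ * U'ᴴ * A * (U' * V₀) = V₀ᴴ * (U'ᴴ * A * U') * V₀ := by
              simp only [Matrix.mul_assoc]
          _ = V₀ᴴ * B * V₀ := by rw [hU'A]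
          _ = 0 := hV0B
    show sSup (ZdiAux.S A) = n - 1
    refine le_antisymm (csSup_le ⟨0, ZdiAux.zero_mem_S A⟩ fun k hk => ?_)
      (le_csSup (ZdiAux.bddAbove_S A) hmem)
    by_contra hgt
    push_neg at hgt
    have hnmem : n ∈ ZdiAux.S A := ZdiAux.mem_S_mono A (by omega) hk
    exact hA0 (ZdiAux.eq_zero_of_n_mem_S hnmem)
end

section
/- Let n ≥ 2 and let w_1, …, w_n be complex numbers. Let A be the n-by-n matrix with A(j, j+1) = w_j for 1 ≤ j ≤ n−1 and all other entries 0, and let A' be the matrix obtained from A by additionally setting A'(n, 1) = w_n. If w_1, …, w_{n−1} are all nonzero, then every eigenvalue of Re A has multiplicity 1; and if w_1, …, w_n are all nonzero, then every eigenvalue of Re A' has multiplicity at most 2. -/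
open Matrix Polynomial

lemma cyc_row {n : ℕ} [NeZero n] (hn : 2 ≤ n) (v : ℕ → ℂ) (μ : ℂ) (x : Fin n → ℂ)
    (hx : (matRe (cycMat n v) - μ • 1).mulVec x = 0) (i : Fin n) :
    (2⁻¹ : ℂ) * (v ↑i * x (i + 1) + (starRingEnd ℂ) (v ↑(i - 1)) * x (i - 1)) = μ * x i := by
  have hone : ((1 : Fin n) : ℕ) = 1 := by
    rw [Fin.val_one']; exact Nat.mod_eq_of_lt (by omega)
  have hval : ∀ a : Fin n, ((a + 1 : Fin n) : ℕ) = (↑a + 1) % n := by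
    intro a; rw [Fin.val_add, hone]
  have hi := congrFun hx i
  rw [Matrix.sub_mulVec, Matrix.smul_mulVec, Matrix.one_mulVec] at hi
  simp only [Pi.sub_apply, Pi.zero_apply, Pi.smul_apply, smul_eq_mul] at hi
  have hi' : (matRe (cycMat n v)).mulVec x i = μ * x i := sub_eq_zero.mp hi
  rw [matRe, Matrix.smul_mulVec, Matrix.add_mulVec] at hi'
  have h1 : (cycMat n v).mulVec x i = v ↑i * x (i + 1) := by
    rw [Matrix.mulVec, dotProduct]
    have : ∀ j : Fin n, cycMat n v i j * x j =
        if j = i + 1 then v ↑i * x j else 0 := by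
      intro j
      simp only [cycMat, Matrix.of_apply]
      by_cases h : j = i + 1
      · subst h; rw [if_pos (hval i), if_pos rfl]
      · rw [if_neg, if_neg h, zero_mul]
        intro hc
        exact h (Fin.ext (by rw [hc, hval i]))
    simp_rw [this]
    rw [Finset.sum_ite_eq' Finset.univ (i + 1) (fun j => v ↑i * x j)]
    simp
  have h2 : (cycMat n v)ᴴ.mulVec x i = (starRingEnd ℂ) (v ↑(i - 1)) * x (i - 1) := by
    rw [Matrix.mulVec, dotProduct]
    have : ∀ j : Fin n, (cycMat n v)ᴴ i j * x j =
        if j = i - 1 then (starRingEnd ℂ) (v ↑j) * x j else 0 := by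
      intro j
      simp only [Matrix.conjTranspose_apply, cycMat, Matrix.of_apply]
      have hiff : ((i : ℕ) = (↑j + 1) % n) ↔ j = i - 1 := by
        rw [← hval j, ← Fin.ext_iff, eq_comm]
        exact eq_sub_iff_add_eq.symm
      by_cases h : j = i - 1
      · rw [if_pos (hiff.mpr h), if_pos h]; rfl
      · rw [if_neg (fun hc => h (hiff.mp hc)), if_neg h, star_zero, zero_mul]
    simp_rw [this]
    rw [Finset.sum_ite_eq' Finset.univ (i - 1) (fun j => (starRingEnd ℂ) (v ↑j) * x j)]
    simp
  rw [Pi.smul_apply, Pi.add_apply, h1, h2, smul_eq_mul] at hi'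
  exact hi'

lemma super_eq_cyc {n : ℕ} (hn : 2 ≤ n) (w : ℕ → ℂ) :
    superMat n w = cycMat n (fun j => if j = n - 1 then 0 else w j) := by
  ext i j
  simp only [superMat, cycMat, Matrix.of_apply]
  by_cases hi : (i : ℕ) = n - 1
  · have h1 : ¬ ((j : ℕ) = (i : ℕ) + 1) := by have := j.isLt; omega
    rw [if_neg h1]
    split <;> simp [hi]
  · have hlt : (i : ℕ) + 1 < n := by have := i.isLt; omega
    rw [Nat.mod_eq_of_lt hlt, if_neg hi]

lemma fin_add_one {n : ℕ} [NeZero n] (hn : 2 ≤ n) (m : ℕ) (h : m + 1 < n) :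
    (⟨m, by omega⟩ : Fin n) + 1 = ⟨m + 1, h⟩ := by
  apply Fin.ext
  rw [Fin.val_add, Fin.val_one', Nat.mod_eq_of_lt (show 1 < n by omega)]
  exact Nat.mod_eq_of_lt h

lemma fin_sub_one {n : ℕ} [NeZero n] (hn : 2 ≤ n) (m : ℕ) (h : m + 1 < n) :
    (⟨m + 1, h⟩ : Fin n) - 1 = ⟨m, by omega⟩ := by
  rw [sub_eq_iff_eq_add, fin_add_one hn m h]

lemma fin_zero_sub_one {n : ℕ} [NeZero n] (hn : 2 ≤ n) :
    (⟨0, by omega⟩ : Fin n) - 1 = ⟨n - 1, by omega⟩ := by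
  rw [sub_eq_iff_eq_add]
  apply Fin.ext
  rw [Fin.val_add, Fin.val_one', Nat.mod_eq_of_lt (show 1 < n by omega)]
  show (0 : ℕ) = (n - 1 + 1) % n
  rw [show n - 1 + 1 = n by omega, Nat.mod_self]

lemma finrank_le_of_inj_proj {n : ℕ} (S : Submodule ℂ (Fin n → ℂ)) (i : Fin n)
    (h : ∀ x ∈ S, x i = 0 → x = 0) : Module.finrank ℂ S ≤ 1 := by
  have := LinearMap.finrank_le_finrank_of_injective (f :=
    (LinearMap.proj (R := ℂ) (φ := fun _ : Fin n => ℂ) i).comp S.subtype)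
    (by
      rw [← LinearMap.ker_eq_bot, LinearMap.ker_eq_bot']
      intro ⟨x, hx⟩ hxi
      exact Subtype.ext (h x hx hxi))
  simpa using this

lemma finrank_le_of_inj_proj2 {n : ℕ} (S : Submodule ℂ (Fin n → ℂ)) (i j : Fin n)
    (h : ∀ x ∈ S, x i = 0 → x j = 0 → x = 0) : Module.finrank ℂ S ≤ 2 := by
  have := LinearMap.finrank_le_finrank_of_injective (f :=
    LinearMap.prod
      ((LinearMap.proj (R := ℂ) (φ := fun _ : Fin n => ℂ) i).comp S.subtype)
      ((LinearMap.proj (R := ℂ) (φ := fun _ : Fin n => ℂ) j).comp S.subtype))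
    (by
      rw [← LinearMap.ker_eq_bot, LinearMap.ker_eq_bot']
      intro ⟨x, hx⟩ hxi
      have h1 : x i = 0 := congrArg Prod.fst hxi
      have h2 : x j = 0 := congrArg Prod.snd hxi
      exact Subtype.ext (h x hx h1 h2))
  simpa [Module.finrank_prod] using this

/-- Lemma 4.3. -/
theorem eigenvalue_multiplicity_shift {n : ℕ} (hn : 2 ≤ n) (w : ℕ → ℂ) :
    ((∀ j, j < n - 1 → w j ≠ 0) →
      ∀ μ : ℝ, Module.finrank ℂ
        (LinearMap.ker (matRe (superMat n w) - (μ : ℂ) • 1).mulVecLin) ≤ 1) ∧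
    ((∀ j, j < n → w j ≠ 0) →
      ∀ μ : ℝ, Module.finrank ℂ
        (LinearMap.ker (matRe (cycMat n w) - (μ : ℂ) • 1).mulVecLin) ≤ 2) := by
  haveI : NeZero n := ⟨by omega⟩
  constructor
  · intro hw μ
    apply finrank_le_of_inj_proj _ ⟨0, by omega⟩
    intro x hx hx0
    set v : ℕ → ℂ := fun j => if j = n - 1 then 0 else w j with hv
    have hx' : (matRe (cycMat n v) - (μ : ℂ) • 1).mulVec x = 0 := by
      rw [← super_eq_cyc hn w]
      simpa [Matrix.mulVecLin_apply, Matrix.sub_mulVec, Matrix.smul_mulVec, Matrix.one_mulVec] using hx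
    have key : ∀ m : ℕ, ∀ hm : m < n, x ⟨m, hm⟩ = 0 := by
      intro m
      induction m using Nat.strong_induction_on with
      | _ m ih =>
        intro hm
        match m with
        | 0 => exact hx0
        | m + 1 =>
          have hmn : m < n := by omega
          have hrow := cyc_row hn v (μ : ℂ) x hx' ⟨m, hmn⟩
          rw [fin_add_one hn m hm] at hrow
          have hxm : x ⟨m, hmn⟩ = 0 := ih m (by omega) hmn
          have hprev : (starRingEnd ℂ) (v ↑((⟨m, hmn⟩ : Fin n) - 1)) *
              x ((⟨m, hmn⟩ : Fin n) - 1) = 0 := by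
            match m with
            | 0 =>
              rw [fin_zero_sub_one hn]
              simp [hv]
            | m + 1 =>
              rw [fin_sub_one hn m hmn, ih m (by omega) (by omega), mul_zero]
          rw [hxm, hprev, mul_zero, add_zero] at hrow
          have hvm : v m ≠ 0 := by
            have hne : m ≠ n - 1 := by omega
            simpa [hv, hne] using hw m (by omega)
          rcases mul_eq_zero.mp hrow with h | h
          · exact absurd h (by norm_num)
          · exact (mul_eq_zero.mp h).resolve_left hvm
    funext i
    have := key ↑i i.isLt
    simpa using this
  · intro hw μ
    apply finrank_le_of_inj_proj2 _ ⟨0, by omega⟩ ⟨1, by omega⟩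
    intro x hx hx0 hx1
    have hx' : (matRe (cycMat n w) - (μ : ℂ) • 1).mulVec x = 0 := by
      simpa [Matrix.mulVecLin_apply, Matrix.sub_mulVec, Matrix.smul_mulVec, Matrix.one_mulVec] using hx
    have key : ∀ m : ℕ, ∀ hm : m < n, x ⟨m, hm⟩ = 0 := by
      intro m
      induction m using Nat.strong_induction_on with
      | _ m ih =>
        intro hm
        match m with
        | 0 => exact hx0
        | 1 => exact hx1
        | m + 2 =>
          have hm1 : m + 1 < n := by omega
          have hrow := cyc_row hn w (μ : ℂ) x hx' ⟨m + 1, hm1⟩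
          rw [fin_add_one hn (m + 1) hm, fin_sub_one hn m hm1,
            ih (m + 1) (by omega) hm1, ih m (by omega) (by omega), mul_zero,
            mul_zero, add_zero] at hrow
          have hvm : w (m + 1) ≠ 0 := hw (m + 1) (by omega)
          rcases mul_eq_zero.mp hrow with h | h
          · exact absurd h (by norm_num)
          · exact (mul_eq_zero.mp h).resolve_left hvm
    funext i
    have := key ↑i i.isLt
    simpa using this
end

section
/- Let n ≥ 2 and let A be the n-by-n complex matrix with entries A(j, j+1) = w_j for 1 ≤ j ≤ n−1 and A(n, 1) = w_n, where w_1, …, w_n are all nonzero, and all other entries equal to 0. Then d(A) = ⌊n/2⌋. -/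
open Matrix Polynomial

lemma cycMat_mulVec {n : ℕ} (hn : 0 < n) (w : ℕ → ℂ) (x : Fin n → ℂ) (i : Fin n) :
    (cycMat n w).mulVec x i = w i * x ⟨((i : ℕ) + 1) % n, Nat.mod_lt _ hn⟩ := by
  classical
  simp only [cycMat, Matrix.mulVec, dotProduct, Matrix.of_apply]
  rw [Finset.sum_eq_single (⟨((i : ℕ) + 1) % n, Nat.mod_lt _ hn⟩ : Fin n)]
  · simp
  · intro j _ hj
    rw [if_neg, zero_mul]
    intro h; exact hj (Fin.ext h)
  · intro h; exact absurd (Finset.mem_univ _) h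

lemma cycMat_mulVec_injective {n : ℕ} (hn : 0 < n) (w : ℕ → ℂ)
    (hw : ∀ j, j < n → w j ≠ 0) :
    Function.Injective (cycMat n w).mulVecLin := by
  rw [← LinearMap.ker_eq_bot, LinearMap.ker_eq_bot']
  intro x hx
  funext j
  have hi : ((j : ℕ) + n - 1) % n < n := Nat.mod_lt _ hn
  have hx' := congrFun hx (⟨((j : ℕ) + n - 1) % n, hi⟩ : Fin n)
  rw [Matrix.mulVecLin_apply] at hx'
  rw [cycMat_mulVec hn w x] at hx'
  have hmod : (((j : ℕ) + n - 1) % n + 1) % n = (j : ℕ) := by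
    rw [Nat.mod_add_mod]
    have : (j : ℕ) + n - 1 + 1 = (j : ℕ) + n := by omega
    rw [this, Nat.add_mod_right, Nat.mod_eq_of_lt j.isLt]
  have hxj : x ⟨(((j : ℕ) + n - 1) % n + 1) % n, Nat.mod_lt _ hn⟩ = x j := by
    congr 1
    exact Fin.ext hmod
  rw [hxj] at hx'
  have := hw _ hi
  simp only [Pi.zero_apply] at hx'
  exact (mul_eq_zero.mp hx').resolve_left this

open ComplexOrder in
lemma zdi_upper {n k : ℕ} {A : Matrix (Fin n) (Fin n) ℂ}
    (hA : Function.Injective A.mulVecLin)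
    (V : Matrix (Fin n) (Fin k) ℂ) (hV : Vᴴ * V = 1) (hAV : Vᴴ * A * V = 0) :
    2 * k ≤ n := by
  classical
  have hVinj : Function.Injective V.mulVecLin := by
    rw [← LinearMap.ker_eq_bot, LinearMap.ker_eq_bot']
    intro x hx
    have : (Vᴴ * V).mulVec x = Vᴴ.mulVec (V.mulVec x) := by
      rw [← Matrix.mulVec_mulVec]
    rw [hV] at this
    rw [Matrix.mulVecLin_apply] at hx
    rw [hx] at this
    simpa [Matrix.one_mulVec, Matrix.mulVec_zero] using this
  have hginj : Function.Injective (A * V).mulVecLin := by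
    rw [Matrix.mulVecLin_mul]
    exact hA.comp hVinj
  have hrange : LinearMap.range (A * V).mulVecLin ≤ LinearMap.ker Vᴴ.mulVecLin := by
    rintro _ ⟨x, rfl⟩
    simp only [LinearMap.mem_ker, Matrix.mulVecLin_apply, Matrix.mulVec_mulVec]
    rw [← Matrix.mul_assoc, hAV]
    simp
  have hk1 : Module.finrank ℂ (LinearMap.range (A * V).mulVecLin) = k := by
    rw [LinearMap.finrank_range_of_inj hginj, Module.finrank_fin_fun]
  have hVrank : Module.finrank ℂ (LinearMap.range V.mulVecLin) = k := by
    rw [LinearMap.finrank_range_of_inj hVinj, Module.finrank_fin_fun]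
  have hVHrank : Module.finrank ℂ (LinearMap.range Vᴴ.mulVecLin) = k := by
    have h1 : Vᴴ.rank = V.rank := Matrix.rank_conjTranspose V
    simpa [Matrix.rank, hVrank] using h1
  have hrn := LinearMap.finrank_range_add_finrank_ker Vᴴ.mulVecLin
  rw [hVHrank, Module.finrank_fin_fun] at hrn
  have hle : Module.finrank ℂ (LinearMap.range (A * V).mulVecLin) ≤
      Module.finrank ℂ (LinearMap.ker Vᴴ.mulVecLin) :=
    Submodule.finrank_mono hrange
  rw [hk1] at hle
  omega

/-- Lemma 4.4, first part. -/
theorem zdi_cycMat {n : ℕ} (hn : 2 ≤ n) (w : ℕ → ℂ) (hw : ∀ j, j < n → w j ≠ 0) :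
    zdi (cycMat n w) = n / 2 := by
  classical
  have hn0 : 0 < n := by omega
  set S := {k : ℕ | ∃ V : Matrix (Fin n) (Fin k) ℂ, Vᴴ * V = 1 ∧ Vᴴ * (cycMat n w) * V = 0}
    with hS
  -- the embedding a ↦ 2a
  have h2a : ∀ a : Fin (n / 2), 2 * (a : ℕ) < n := fun a => by
    have := a.isLt; omega
  set f : Fin (n / 2) → Fin n := fun a => ⟨2 * (a : ℕ), h2a a⟩ with hf
  have hfinj : Function.Injective f := by
    intro a b hab
    have : 2 * (a : ℕ) = 2 * (b : ℕ) := congrArg Fin.val hab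
    exact Fin.ext (by omega)
  set V : Matrix (Fin n) (Fin (n / 2)) ℂ := Matrix.of fun i a => if i = f a then 1 else 0
    with hVdef
  have hVV : Vᴴ * V = 1 := by
    ext a b
    rw [Matrix.mul_apply, Finset.sum_eq_single (f a)]
    · by_cases h : a = b
      · subst h; simp [hVdef, Matrix.one_apply]
      · have hfab : f a ≠ f b := fun hh => h (hfinj hh)
        simp [hVdef, Matrix.one_apply, h, hfab]
    · intro i _ hi
      simp [hVdef, Matrix.conjTranspose_apply, hi]
    · simp
  have hAVentry : ∀ (a b : Fin (n / 2)), (Vᴴ * cycMat n w * V) a b = cycMat n w (f a) (f b) := by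
    intro a b
    have hcol : ∀ (M : Matrix (Fin n) (Fin n) ℂ) (i : Fin n), (M * V) i b = M i (f b) := by
      intro M i
      rw [Matrix.mul_apply, Finset.sum_eq_single (f b)]
      · simp [hVdef]
      · intro j _ hj; simp [hVdef, hj]
      · simp
    rw [Matrix.mul_assoc, Matrix.mul_apply, Finset.sum_eq_single (f a)]
    · rw [hcol]
      simp [hVdef, Matrix.conjTranspose_apply]
    · intro i _ hi
      simp [hVdef, Matrix.conjTranspose_apply, hi]
    · simp
  have hAV : Vᴴ * cycMat n w * V = 0 := by
    ext a b
    rw [hAVentry a b]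
    simp only [cycMat, Matrix.of_apply, Matrix.zero_apply, hf]
    rw [if_neg]
    have ha := a.isLt
    have hb := b.isLt
    have h1 : (2 * (a : ℕ) + 1) % n = 2 * (a : ℕ) + 1 :=
      Nat.mod_eq_of_lt (by omega)
    rw [h1]
    omega
  have hmem : n / 2 ∈ S := ⟨V, hVV, hAV⟩
  have hub : ∀ k ∈ S, k ≤ n / 2 := by
    rintro k ⟨W, hW1, hW2⟩
    have := zdi_upper (cycMat_mulVec_injective hn0 w hw) W hW1 hW2
    omega
  rw [zdi]
  exact le_antisymm (csSup_le ⟨n / 2, hmem⟩ hub) (le_csSup ⟨n / 2, hub⟩ hmem)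
end
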